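/- arXiv:1101.1666 — 14 statements merged into one kernel-verified Lean document; each statement's English description precedes it below -/
import Mathlib

section
/- A sequence of words f^{(1)}, f^{(2)}, ..., f^{(n-1)} over the alphabet {0,1}, where f^{(j)} has length j, is the sequence of columns of the shape of a gapless monotone triangle of size n if and only if for every 1 ≤ j ≤ n-2 the pair g = f^{(j)}, h = f^{(j+1)} satisfies: |h| = |g| + 1 and for every i ≤ |g|, the partial sums satisfy Σ_{k=1}^{i} g_k ≥ Σ_{k=1}^{i} h_k. -/
/-- A monotone triangle (Gog triangle) of size `n`. -/
def MonotoneTriangle (n : ℕ) (a : ℕ → ℕ → ℕ) : Prop :=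
  (∀ i j, 1 ≤ j → j + 1 ≤ i → i ≤ n → a i j < a i (j + 1)) ∧
  (∀ i j, 1 ≤ j → j ≤ i → i + 1 ≤ n → a (i + 1) j ≤ a i j) ∧
  (∀ i j, 1 ≤ j → j ≤ i → i + 1 ≤ n → a i j ≤ a (i + 1) (j + 1)) ∧
  (∀ j, 1 ≤ j → j ≤ n → a n j = j)

/-- A monotone triangle is gapless if `a i j - a (i+1) j ≤ 1` whenever both are defined. -/
def GaplessMT (n : ℕ) (a : ℕ → ℕ → ℕ) : Prop :=
  ∀ i j, 1 ≤ j → j ≤ i → i + 1 ≤ n → a i j ≤ a (i + 1) j + 1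

/-- A sequence of 0/1-words `f 1, …, f (n-1)`, with `f j` of length `j`
(entries `f j k`, `1 ≤ k ≤ j`), is the sequence of column words of the shape of a
gapless monotone triangle of size `n` (where the shape is `s i j = a i j - a (i+1) j`
and `f j k = s (n-k) (n-j)`) iff for every `1 ≤ j ≤ n-2` and `i ≤ j`, the partial
sums satisfy `∑_{k=1}^i f (j+1) k ≤ ∑_{k=1}^i f j k`. -/
theorem columns_of_gapless_shape_iff (n : ℕ) (hn : 1 ≤ n) (f : ℕ → ℕ → ℕ)
    (h01 : ∀ j k, 1 ≤ k → k ≤ j → j ≤ n - 1 → f j k = 0 ∨ f j k = 1) :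
    (∃ a : ℕ → ℕ → ℕ, MonotoneTriangle n a ∧ GaplessMT n a ∧
        ∀ j k, 1 ≤ k → k ≤ j → j ≤ n - 1 →
          f j k = a (n - k) (n - j) - a (n - k + 1) (n - j)) ↔
    (∀ j, 1 ≤ j → j ≤ n - 2 → ∀ i, i ≤ j →
        ∑ k ∈ Finset.Icc 1 i, f (j + 1) k ≤ ∑ k ∈ Finset.Icc 1 i, f j k) := by
  constructor
  · rintro ⟨a, ⟨h1, h2, h3, h4⟩, hg, hf⟩
    have htel : ∀ j, 1 ≤ j → j ≤ n - 1 → ∀ i, i ≤ j →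
        (n - j) + ∑ k ∈ Finset.Icc 1 i, f j k = a (n - i) (n - j) := by
      intro j hj hjn i
      induction i with
      | zero =>
        intro _
        rw [show Finset.Icc 1 0 = (∅ : Finset ℕ) by simp, Finset.sum_empty, Nat.sub_zero,
          h4 (n - j) (by omega) (by omega)]
        omega
      | succ m ih =>
        intro hij
        have hm := ih (by omega)
        rw [Finset.sum_Icc_succ_top (by omega)]
        have hfe := hf j (m + 1) (by omega) (by omega) hjn
        have e : n - (m + 1) + 1 = n - m := by omega
        rw [e] at hfe
        have h2' := h2 (n - (m + 1)) (n - j) (by omega) (by omega) (by omega)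
        rw [e] at h2'
        omega
    intro j hj hjn i hij
    have t1 := htel j (by omega) (by omega) i (by omega)
    have t2 := htel (j + 1) (by omega) (by omega) i (by omega)
    have hlt := h1 (n - i) (n - (j + 1)) (by omega) (by omega) (by omega)
    rw [show n - (j + 1) + 1 = n - j by omega] at hlt
    omega
  · intro hcond
    have hcmp : ∀ J I, J + 1 ≤ n - 1 → I ≤ J →
        ∑ k ∈ Finset.Icc 1 I, f (J + 1) k ≤ ∑ k ∈ Finset.Icc 1 I, f J k := by
      intro J I hJ hI
      rcases Nat.eq_zero_or_pos J with h0 | h0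
      · have : I = 0 := by omega
        subst this
        simp
      · exact hcond J h0 (by omega) I hI
    refine ⟨fun p q => q + ∑ k ∈ Finset.Icc 1 (n - p), f (n - q) k, ⟨?_, ?_, ?_, ?_⟩, ?_, ?_⟩
    · -- strict increase along rows
      intro i j hj hji hin
      dsimp only
      have hc := hcmp (n - (j + 1)) (n - i) (by omega) (by omega)
      rw [show n - (j + 1) + 1 = n - j by omega] at hc
      omega
    · -- columns weakly decrease downward
      intro i j hj hji hin
      dsimp only
      have : ∑ k ∈ Finset.Icc 1 (n - (i + 1)), f (n - j) k ≤
          ∑ k ∈ Finset.Icc 1 (n - i), f (n - j) k :=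
        Finset.sum_le_sum_of_subset (Finset.Icc_subset_Icc_right (by omega))
      omega
    · -- diagonal condition
      intro i j hj hji hin
      dsimp only
      have e : n - i = (n - (i + 1)) + 1 := by omega
      rw [e, Finset.sum_Icc_succ_top (by omega)]
      have hb := h01 (n - j) (n - (i + 1) + 1) (by omega) (by omega) (by omega)
      have hc := hcmp (n - (j + 1)) (n - (i + 1)) (by omega) (by omega)
      rw [show n - (j + 1) + 1 = n - j by omega] at hc
      omega
    · -- bottom row
      intro j hj hjn
      dsimp only
      rw [Nat.sub_self, show Finset.Icc 1 0 = (∅ : Finset ℕ) by simp, Finset.sum_empty]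
      omega
    · -- gapless
      intro i j hj hji hin
      dsimp only
      have e : n - i = (n - (i + 1)) + 1 := by omega
      rw [e, Finset.sum_Icc_succ_top (by omega)]
      have hb := h01 (n - j) (n - (i + 1) + 1) (by omega) (by omega) (by omega)
      omega
    · -- recovering f
      intro j k hk hkj hjn
      obtain ⟨m, rfl⟩ : ∃ m, k = m + 1 := ⟨k - 1, by omega⟩
      dsimp only
      rw [show n - (n - j) = j by omega, show n - (n - (m + 1)) = m + 1 by omega,
        show n - (n - (m + 1) + 1) = m by omega, Finset.sum_Icc_succ_top (by omega)]
      have hb := h01 j (m + 1) (by omega) (by omega) hjn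
      omega
end

section
/- Let g and h be words over {0,1} of lengths n-1 and n respectively. Then g and h correspond to two consecutive columns in the shape of a gapless monotone triangle (i.e., for every i ≤ n-1, Σ_{k=1}^{i} g_k ≥ Σ_{k=1}^{i} h_k) if and only if the word w = φ(g,h) of length 2n-1 over the alphabet {a,b} is a prefix of a Dyck word. -/
/-- `theta` maps a pair of letters from `{0,1}` to a word of length 2 over `{a,b}`,
with `true` playing the role of the letter `a` and `false` of the letter `b`:
`theta 0 0 = ab`, `theta 1 1 = ba`, `theta 1 0 = aa`, `theta 0 1 = bb`. -/
def theta (gk hk : ℕ) : List Bool := [decide (hk = 0), decide (gk = 1)]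

/-- For words `g, h` over `{0,1}` with `|h| = |g| + 1 = n` (entries `g 1, …, g (n-1)`
and `h 1, …, h n`), `phi n g h = a θ(g 1, h 1) ⋯ θ(g (n-1), h (n-1))`,
a word of length `2n - 1` over `{a, b}` (with `true = a`, `false = b`). -/
def phi (n : ℕ) (g h : ℕ → ℕ) : List Bool :=
  true :: (List.range (n - 1)).flatMap (fun k => theta (g (k + 1)) (h (k + 1)))

/-- A word over `{a,b}` (with `true = a`, `false = b`) is a prefix of a Dyck word iff
every prefix contains at least as many `a`'s as `b`'s. -/
def IsDyckPrefix (w : List Bool) : Prop :=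
  ∀ m : ℕ, (w.take m).count false ≤ (w.take m).count true

namespace DyckAux

/-- concatenation of the first `i` blocks -/
def L (g h : ℕ → ℕ) (i : ℕ) : List Bool :=
  (List.range i).flatMap (fun k => theta (g (k + 1)) (h (k + 1)))

lemma L_succ (g h : ℕ → ℕ) (i : ℕ) :
    L g h (i + 1) = L g h i ++ theta (g (i + 1)) (h (i + 1)) := by
  simp [L, List.range_succ]

lemma L_length (g h : ℕ → ℕ) (i : ℕ) : (L g h i).length = 2 * i := by
  induction i with
  | zero => simp [L]
  | succ i ih => rw [L_succ]; simp [theta, ih]; omega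

lemma take_L_even (g h : ℕ → ℕ) {i N : ℕ} (hiN : i ≤ N) :
    (L g h N).take (2 * i) = L g h i := by
  induction N, hiN using Nat.le_induction with
  | base => exact List.take_of_length_le (by rw [L_length])
  | succ N hiN ih =>
      rw [L_succ, List.take_append_of_le_length (by rw [L_length]; omega), ih]

lemma take_L_odd (g h : ℕ → ℕ) {i N : ℕ} (hiN : i < N) :
    (L g h N).take (2 * i + 1) = L g h i ++ [decide (h (i + 1) = 0)] := by
  induction N, hiN using Nat.le_induction with
  | base =>
      rw [L_succ]
      have hl : 2 * i + 1 = (L g h i).length + 1 := by rw [L_length]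
      rw [hl, List.take_append]
      simp [theta]
  | succ N hiN ih =>
      rw [L_succ, List.take_append_of_le_length (by rw [L_length]; omega), ih]

lemma count_true_L (g h : ℕ → ℕ) (i : ℕ) :
    (L g h i).count true = ∑ k ∈ Finset.range i,
      ((if h (k + 1) = 0 then 1 else 0) + (if g (k + 1) = 1 then 1 else 0)) := by
  induction i with
  | zero => simp [L]
  | succ i ih =>
      rw [L_succ, List.count_append, ih, Finset.sum_range_succ, theta]
      simp [List.count_cons]
      by_cases h1 : h (i + 1) = 0 <;> by_cases h2 : g (i + 1) = 1 <;>
        simp [h1, h2] <;> omega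

lemma count_false_L (g h : ℕ → ℕ) (i : ℕ) :
    (L g h i).count false = ∑ k ∈ Finset.range i,
      ((if h (k + 1) = 0 then 0 else 1) + (if g (k + 1) = 1 then 0 else 1)) := by
  induction i with
  | zero => simp [L]
  | succ i ih =>
      rw [L_succ, List.count_append, ih, Finset.sum_range_succ, theta]
      simp [List.count_cons]
      by_cases h1 : h (i + 1) = 0 <;> by_cases h2 : g (i + 1) = 1 <;>
        simp [h1, h2] <;> omega

lemma sum_range_eq_Icc (f : ℕ → ℕ) (i : ℕ) :
    ∑ k ∈ Finset.range i, f (k + 1) = ∑ k ∈ Finset.Icc 1 i, f k := by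
  induction i with
  | zero => simp
  | succ i ih =>
      rw [Finset.sum_range_succ, ih, Finset.sum_Icc_succ_top (by omega)]

/-- key identities: sums of indicator terms in terms of the column sums -/
lemma sum_facts (f : ℕ → ℕ) {i N : ℕ} (hf : ∀ k, 1 ≤ k → k ≤ N → f k = 0 ∨ f k = 1)
    (hiN : i ≤ N) :
    (∑ k ∈ Finset.range i, (if f (k + 1) = 0 then 0 else 1))
        = ∑ k ∈ Finset.Icc 1 i, f k ∧
    (∑ k ∈ Finset.range i, (if f (k + 1) = 0 then 1 else 0))
        + ∑ k ∈ Finset.Icc 1 i, f k = i := by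
  constructor
  · rw [← sum_range_eq_Icc]
    refine Finset.sum_congr rfl fun k hk => ?_
    simp only [Finset.mem_range] at hk
    rcases hf (k + 1) (by omega) (by omega) with h' | h' <;> simp [h']
  · rw [← sum_range_eq_Icc, ← Finset.sum_add_distrib]
    rw [Finset.sum_congr rfl (g := fun _ => 1) fun k hk => ?_]
    · simp
    · simp only [Finset.mem_range] at hk
      rcases hf (k + 1) (by omega) (by omega) with h' | h' <;> simp [h']

/-- the same, with the indicator phrased via `= 1` -/
lemma sum_facts' (f : ℕ → ℕ) {i N : ℕ} (hf : ∀ k, 1 ≤ k → k ≤ N → f k = 0 ∨ f k = 1)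
    (hiN : i ≤ N) :
    (∑ k ∈ Finset.range i, (if f (k + 1) = 1 then 1 else 0))
        = ∑ k ∈ Finset.Icc 1 i, f k ∧
    (∑ k ∈ Finset.range i, (if f (k + 1) = 1 then 0 else 1))
        + ∑ k ∈ Finset.Icc 1 i, f k = i := by
  obtain ⟨h1, h2⟩ := sum_facts f hf hiN
  have e1 : (∑ k ∈ Finset.range i, (if f (k + 1) = 1 then 1 else 0))
      = ∑ k ∈ Finset.range i, (if f (k + 1) = 0 then 0 else 1) := by
    refine Finset.sum_congr rfl fun k hk => ?_
    simp only [Finset.mem_range] at hk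
    rcases hf (k + 1) (by omega) (by omega) with h' | h' <;> simp [h']
  have e2 : (∑ k ∈ Finset.range i, (if f (k + 1) = 1 then 0 else 1))
      = ∑ k ∈ Finset.range i, (if f (k + 1) = 0 then 1 else 0) := by
    refine Finset.sum_congr rfl fun k hk => ?_
    simp only [Finset.mem_range] at hk
    rcases hf (k + 1) (by omega) (by omega) with h' | h' <;> simp [h']
  rw [e1, e2]
  exact ⟨h1, h2⟩

lemma count_false_cons (x : List Bool) : (true :: x).count false = x.count false := by simp

lemma count_true_cons (x : List Bool) : (true :: x).count true = x.count true + 1 := by simp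

end DyckAux

open DyckAux in
/-- Words `g` and `h` over `{0,1}`, of lengths `n-1` and `n`, correspond to two
consecutive columns in the shape of a gapless monotone triangle (i.e. for every
`i ≤ n-1`, `∑_{k=1}^i h k ≤ ∑_{k=1}^i g k`) iff `phi n g h` is a prefix of a
Dyck word. -/
theorem consecutive_columns_iff_dyck_prefix (n : ℕ) (hn : 1 ≤ n) (g h : ℕ → ℕ)
    (hg : ∀ k, 1 ≤ k → k ≤ n - 1 → g k = 0 ∨ g k = 1)
    (hh : ∀ k, 1 ≤ k → k ≤ n → h k = 0 ∨ h k = 1) :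
    (∀ i, i ≤ n - 1 →
        ∑ k ∈ Finset.Icc 1 i, h k ≤ ∑ k ∈ Finset.Icc 1 i, g k) ↔
    IsDyckPrefix (phi n g h) := by
  set N := n - 1 with hN
  -- abbreviations for counts
  have hTF : ∀ i ≤ N,
      (L g h i).count false + 2 * (∑ k ∈ Finset.Icc 1 i, g k)
        = (L g h i).count true + 2 * (∑ k ∈ Finset.Icc 1 i, h k) := by
    intro i hi
    obtain ⟨hg1, hg2⟩ := sum_facts' g hg hi
    obtain ⟨hh1, hh2⟩ := sum_facts h (fun k hk1 hk2 => hh k hk1 (by omega)) hi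
    rw [count_true_L, count_false_L, Finset.sum_add_distrib, Finset.sum_add_distrib,
      hg1, hh1]
    omega
  have hphi : phi n g h = true :: L g h N := rfl
  constructor
  · -- columns → Dyck prefix
    intro hcol m
    rcases m with _ | m'
    · simp
    rw [hphi]
    rw [List.take_succ_cons, count_false_cons, count_true_cons]
    -- goal: count false (take m' (L N)) ≤ count true (take m' (L N)) + 1
    by_cases hbig : 2 * N ≤ m'
    · rw [List.take_of_length_le (by rw [L_length]; omega)]
      have := hTF N le_rfl
      have := hcol N le_rfl
      omega
    · push_neg at hbig
      rcases Nat.even_or_odd m' with ⟨i, hieq⟩ | ⟨i, hieq⟩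
      · have hiN : i ≤ N := by omega
        rw [show m' = 2 * i by omega, take_L_even g h hiN]
        have := hTF i hiN
        have := hcol i hiN
        omega
      · have hiN : i < N := by omega
        rw [show m' = 2 * i + 1 by omega, take_L_odd g h hiN]
        rw [List.count_append, List.count_append]
        have h1 := hTF i (le_of_lt hiN)
        have h2 := hcol i (le_of_lt hiN)
        by_cases hz : h (i + 1) = 0 <;> simp [hz] <;> omega
  · -- Dyck prefix → columns
    intro hd i hi
    have hD := hd (2 * i + 1)
    rw [hphi, List.take_succ_cons, count_false_cons, count_true_cons,
      take_L_even g h hi] at hD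
    have := hTF i hi
    omega
end

section
/- The number of pairs of words (g,h) over the alphabet {0,1} with |h| = |g| + 1 = n such that g and h can represent consecutive columns in the shape of a gapless monotone triangle (i.e., for every i ≤ n-1, Σ_{k=1}^{i} g_k ≥ Σ_{k=1}^{i} h_k) is equal to the central binomial coefficient C(2n, n). -/
open Finset

namespace GMT

/-- prefix sum of the first `i` letters -/
def ps {m : ℕ} (f : Fin m → Fin 2) (i : ℕ) : ℕ :=
  ∑ k ∈ Finset.univ.filter (fun k : Fin m => (k : ℕ) < i), ((f k : ℕ))

lemma ps_of_ge {m : ℕ} (f : Fin m → Fin 2) {i : ℕ} (h : m ≤ i) : ps f i = ps f m := by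
  have key : ∀ j, m ≤ j → Finset.univ.filter (fun k : Fin m => (k : ℕ) < j) = Finset.univ := by
    intro j hj
    apply Finset.filter_true_of_mem
    intro k _
    exact lt_of_lt_of_le k.isLt hj
  rw [ps, ps, key i h, key m le_rfl]

lemma ps_snoc {m : ℕ} (f : Fin m → Fin 2) (a : Fin 2) (i : ℕ) :
    ps (Fin.snoc f a) i = ps f i + if m < i then (a : ℕ) else 0 := by
  rw [ps, ps, Finset.sum_filter, Finset.sum_filter, Fin.sum_univ_castSucc]
  simp [Fin.snoc_castSucc, Fin.snoc_last]

def Dom (m : ℕ) (p : (Fin m → Fin 2) × (Fin m → Fin 2)) : Prop :=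
  ∀ i, i ≤ m → ps p.2 i ≤ ps p.1 i

def Cond (m d : ℕ) (p : (Fin m → Fin 2) × (Fin m → Fin 2)) : Prop :=
  Dom m p ∧ ps p.2 m + d ≤ ps p.1 m

noncomputable def M (m d : ℕ) : ℕ :=
  Nat.card {p : (Fin m → Fin 2) × (Fin m → Fin 2) // Cond m d p}

lemma ps_fin_zero (f : Fin 0 → Fin 2) (i : ℕ) : ps f i = 0 := by
  simp [ps]

lemma M_zero_zero : M 0 0 = 1 := by
  rw [M]
  rw [Nat.card_congr (Equiv.subtypeUnivEquiv ?_)]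
  · simp [Nat.card_eq_fintype_card]
  · intro p
    exact ⟨fun i _ => by simp [ps_fin_zero], by simp [ps_fin_zero]⟩

lemma M_zero_succ (d : ℕ) : M 0 (d + 1) = 0 := by
  rw [M]
  have : IsEmpty {p : (Fin 0 → Fin 2) × (Fin 0 → Fin 2) // Cond 0 (d + 1) p} := by
    constructor
    rintro ⟨p, -, hs⟩
    simp [ps_fin_zero] at hs
  simp [Nat.card_of_isEmpty]

lemma cond_snoc {m d : ℕ} (g h : Fin m → Fin 2) (a b : Fin 2) :
    Cond (m + 1) d (Fin.snoc g a, Fin.snoc h b) ↔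
      Dom m (g, h) ∧ ps h m + (b : ℕ) + d ≤ ps g m + (a : ℕ) := by
  constructor
  · rintro ⟨hd, hs⟩
    refine ⟨fun i hi => ?_, ?_⟩
    · have := hd i (by omega)
      rw [ps_snoc, ps_snoc] at this
      simpa [Nat.not_lt.2 hi] using this
    · rw [ps_snoc, ps_snoc, ps_of_ge h (by omega), ps_of_ge g (by omega)] at hs
      simp only [if_pos (Nat.lt_succ_self m)] at hs
      omega
  · rintro ⟨hd, hs⟩
    constructor
    · intro i hi
      rw [ps_snoc, ps_snoc]
      rcases le_or_gt i m with h1 | h1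
      · simpa [Nat.not_lt.2 h1] using hd i h1
      · have hi' : i = m + 1 := by omega
        subst hi'
        rw [ps_of_ge h (by omega), ps_of_ge g (by omega)]
        simp only [if_pos (Nat.lt_succ_self m)]
        omega
    · rw [ps_snoc, ps_snoc, ps_of_ge h (by omega), ps_of_ge g (by omega)]
      simp only [if_pos (Nat.lt_succ_self m)]
      omega

lemma nat_card_sigma {ι : Type*} [Fintype ι] {α : ι → Type*} [∀ i, Finite (α i)] :
    Nat.card (Σ i, α i) = ∑ i, Nat.card (α i) := by
  classical
  letI : ∀ i, Fintype (α i) := fun i => Fintype.ofFinite (α i)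
  simp [Nat.card_eq_fintype_card]

lemma M_succ (m d : ℕ) : M (m + 1) d = M m (d - 1) + 2 * M m d + M m (d + 1) := by
  classical
  set s : Fin 2 × (Fin m → Fin 2) ≃ (Fin (m+1) → Fin 2) :=
    Fin.snocEquiv (fun _ => Fin 2) with hs
  set E : ((Fin (m+1) → Fin 2) × (Fin (m+1) → Fin 2)) ≃
      ((Fin 2 × Fin 2) × ((Fin m → Fin 2) × (Fin m → Fin 2))) :=
    (Equiv.prodCongr s.symm s.symm).trans (Equiv.prodProdProdComm _ _ _ _) with hE
  have key : ∀ (ab : Fin 2 × Fin 2) (q : (Fin m → Fin 2) × (Fin m → Fin 2)),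
      Cond (m+1) d (E.symm (ab, q)) ↔
        Dom m q ∧ ps q.2 m + (ab.2 : ℕ) + d ≤ ps q.1 m + (ab.1 : ℕ) := by
    rintro ⟨a, b⟩ ⟨g, h⟩
    have hE' : E.symm ((a, b), (g, h)) = (Fin.snoc g a, Fin.snoc h b) := by
      simp [hE, hs, Equiv.prodProdProdComm, Fin.snocEquiv]
    rw [hE']
    exact cond_snoc g h a b
  have e1 : {p : (Fin (m+1) → Fin 2) × (Fin (m+1) → Fin 2) // Cond (m+1) d p} ≃
      Σ ab : Fin 2 × Fin 2, {q : (Fin m → Fin 2) × (Fin m → Fin 2) //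
        Dom m q ∧ ps q.2 m + (ab.2 : ℕ) + d ≤ ps q.1 m + (ab.1 : ℕ)} := by
    refine (E.subtypeEquiv (fun p => ?_)).trans
      ((Equiv.subtypeProdEquivSigmaSubtype (fun ab q => Cond (m+1) d (E.symm (ab, q)))).trans
        (Equiv.sigmaCongrRight (fun ab => Equiv.subtypeEquivRight (fun q => key ab q))))
    rw [Equiv.symm_apply_apply]
  rw [M, Nat.card_congr e1, nat_card_sigma]
  rw [Fintype.sum_prod_type]
  rw [Fin.sum_univ_two]
  rw [Fin.sum_univ_two, Fin.sum_univ_two]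
  have c00 : ∀ q : (Fin m → Fin 2) × (Fin m → Fin 2),
      (Dom m q ∧ ps q.2 m + (((0 : Fin 2)) : ℕ) + d ≤ ps q.1 m + (((0 : Fin 2)) : ℕ)) ↔
        Cond m d q := by
    intro q; rw [Cond]; norm_num
  have c01 : ∀ q : (Fin m → Fin 2) × (Fin m → Fin 2),
      (Dom m q ∧ ps q.2 m + (((1 : Fin 2)) : ℕ) + d ≤ ps q.1 m + (((0 : Fin 2)) : ℕ)) ↔
        Cond m (d + 1) q := by
    intro q; rw [Cond]; norm_num; intro _; omega
  have c10 : ∀ q : (Fin m → Fin 2) × (Fin m → Fin 2),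
      (Dom m q ∧ ps q.2 m + (((0 : Fin 2)) : ℕ) + d ≤ ps q.1 m + (((1 : Fin 2)) : ℕ)) ↔
        Cond m (d - 1) q := by
    intro q; rw [Cond]; norm_num; intro hd; have := hd m le_rfl; omega
  have c11 : ∀ q : (Fin m → Fin 2) × (Fin m → Fin 2),
      (Dom m q ∧ ps q.2 m + (((1 : Fin 2)) : ℕ) + d ≤ ps q.1 m + (((1 : Fin 2)) : ℕ)) ↔
        Cond m d q := by
    intro q; rw [Cond]; norm_num; intro _; omega
  rw [Nat.card_congr (Equiv.subtypeEquivRight c00),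
      Nat.card_congr (Equiv.subtypeEquivRight c01),
      Nat.card_congr (Equiv.subtypeEquivRight c10),
      Nat.card_congr (Equiv.subtypeEquivRight c11)]
  rw [M, M, M]
  ring

lemma M_eq (m : ℕ) : ∀ d, M m d = if d ≤ m then Nat.choose (2 * m + 1) (m - d) else 0 := by
  induction m with
  | zero =>
    intro d
    cases d with
    | zero => simpa using M_zero_zero
    | succ e => simpa using M_zero_succ e
  | succ m ih =>
    intro d
    rw [M_succ, ih, ih, ih]
    have h23 : 2 * (m + 1) + 1 = 2 * m + 3 := by ring
    rw [h23]
    rcases Nat.eq_zero_or_pos d with rfl | hd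
    · -- d = 0
      rcases Nat.eq_zero_or_pos m with rfl | hm
      · decide
      · obtain ⟨m', rfl⟩ : ∃ m', m = m' + 1 := ⟨m - 1, by omega⟩
        simp only [Nat.zero_sub, Nat.sub_zero, Nat.zero_le, if_pos,
          Nat.zero_add, zero_add]
        rw [show m' + 1 - 1 = m' by omega, if_pos (by omega : 1 ≤ m' + 1)]
        have q1 : (2*(m'+1)+3).choose (m'+1+1) =
            (2*(m'+1)+2).choose (m'+1) + (2*(m'+1)+2).choose (m'+1+1) := by
          rw [show 2*(m'+1)+3 = (2*(m'+1)+2)+1 by ring, Nat.choose_succ_succ']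
        have q2 : (2*(m'+1)+2).choose (m'+1) =
            (2*(m'+1)+1).choose m' + (2*(m'+1)+1).choose (m'+1) := by
          rw [show 2*(m'+1)+2 = (2*(m'+1)+1)+1 by ring, Nat.choose_succ_succ']
        have q3 : (2*(m'+1)+2).choose (m'+1+1) =
            (2*(m'+1)+1).choose (m'+1) + (2*(m'+1)+1).choose (m'+1+1) := by
          rw [show 2*(m'+1)+2 = (2*(m'+1)+1)+1 by ring, Nat.choose_succ_succ']
        have q4 : (2*(m'+1)+1).choose (m'+1+1) = (2*(m'+1)+1).choose (m'+1) :=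
          Nat.choose_symm_half (m'+1)
        omega
    · obtain ⟨e, rfl⟩ : ∃ e, d = e + 1 := ⟨d - 1, by omega⟩
      simp only [Nat.add_sub_cancel]
      by_cases h1 : e + 1 ≤ m + 1
      · rw [if_pos h1, if_pos (by omega : e ≤ m)]
        rw [show m + 1 - (e + 1) = m - e by omega]
        rcases Nat.lt_or_ge e m with he | he
        · rw [if_pos (by omega : e + 1 ≤ m)]
          rcases Nat.lt_or_ge (e + 1) m with he2 | he2
          · -- e + 2 ≤ m
            rw [if_pos (by omega : e + 1 + 1 ≤ m)]
            obtain ⟨j, hj⟩ : ∃ j, m - e - 2 = j := ⟨m - e - 2, rfl⟩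
            rw [show m - e = j + 1 + 1 by omega, show m - (e+1) = j + 1 by omega,
                show m - (e+1+1) = j by omega]
            have q1 : (2*m+3).choose (j+1+1) =
                (2*m+2).choose (j+1) + (2*m+2).choose (j+1+1) := by
              rw [show 2*m+3 = (2*m+2)+1 by ring, Nat.choose_succ_succ']
            have q2 : (2*m+2).choose (j+1) =
                (2*m+1).choose j + (2*m+1).choose (j+1) := by
              rw [show 2*m+2 = (2*m+1)+1 by ring, Nat.choose_succ_succ']
            have q3 : (2*m+2).choose (j+1+1) =
                (2*m+1).choose (j+1) + (2*m+1).choose (j+1+1) := by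
              rw [show 2*m+2 = (2*m+1)+1 by ring, Nat.choose_succ_succ']
            omega
          · -- e + 1 = m
            have hm : m = e + 1 := by omega
            subst hm
            rw [if_neg (by omega)]
            rw [show e + 1 - e = 1 by omega, show e + 1 - (e + 1) = 0 by omega]
            have q1 : (2*(e+1)+3).choose 1 = 2*(e+1)+3 := Nat.choose_one_right _
            have q2 : (2*(e+1)+1).choose 1 = 2*(e+1)+1 := Nat.choose_one_right _
            have q3 : (2*(e+1)+1).choose 0 = 1 := Nat.choose_zero_right _
            omega
        · -- e = m
          have hm : e = m := by omega
          subst hm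
          rw [if_neg (by omega), if_neg (by omega)]
          simp [Nat.sub_self]
      · rw [if_neg h1, if_neg (by omega), if_neg (by omega), if_neg (by omega)]

end GMT

open GMT in
/-- The number of pairs of 0/1-words `(g, h)` with `|h| = |g| + 1 = n` such that `g`
and `h` can represent consecutive columns in the shape of a gapless monotone triangle
(i.e. for every `i ≤ n - 1` the partial sums satisfy
`∑_{k=1}^i g k ≥ ∑_{k=1}^i h k`) equals the central binomial coefficient `C(2n, n)`.
Here `g` is modelled as a function `Fin (n-1) → Fin 2` (the `k`-th letter of the word,
`1 ≤ k ≤ n-1`, being `g ⟨k-1, _⟩`), and similarly for `h`. -/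
theorem card_consecutive_column_pairs (n : ℕ) (hn : 1 ≤ n) :
    Nat.card {p : (Fin (n - 1) → Fin 2) × (Fin n → Fin 2) //
      ∀ i, i ≤ n - 1 →
        ∑ k ∈ Finset.univ.filter (fun k : Fin n => (k : ℕ) < i), ((p.2 k : ℕ))
          ≤ ∑ k ∈ Finset.univ.filter (fun k : Fin (n - 1) => (k : ℕ) < i), ((p.1 k : ℕ))} =
    Nat.choose (2 * n) n := by
  obtain ⟨m, rfl⟩ : ∃ m, n = m + 1 := ⟨n - 1, by omega⟩
  simp only [Nat.add_sub_cancel]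
  change Nat.card {p : (Fin m → Fin 2) × (Fin (m + 1) → Fin 2) //
      ∀ i, i ≤ m → ps p.2 i ≤ ps p.1 i} = Nat.choose (2 * (m + 1)) (m + 1)
  set s : Fin 2 × (Fin m → Fin 2) ≃ (Fin (m+1) → Fin 2) := Fin.snocEquiv (fun _ => Fin 2) with hs
  set E : ((Fin m → Fin 2) × (Fin (m+1) → Fin 2)) ≃
      ((Fin m → Fin 2) × (Fin 2 × (Fin m → Fin 2))) :=
    Equiv.prodCongr (Equiv.refl _) s.symm with hE
  have key : ∀ x : (Fin m → Fin 2) × (Fin 2 × (Fin m → Fin 2)),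
      (∀ i, i ≤ m → ps (E.symm x).2 i ≤ ps (E.symm x).1 i) ↔ Cond m 0 (x.1, x.2.2) := by
    rintro ⟨g, b, h⟩
    have hx : E.symm (g, (b, h)) = (g, Fin.snoc h b) := by
      simp [hE, hs, Fin.snocEquiv]
    rw [hx]
    constructor
    · intro hd
      refine ⟨fun i hi => ?_, ?_⟩
      · have := hd i hi
        rw [ps_snoc] at this
        simpa [Nat.not_lt.2 hi] using this
      · have := hd m le_rfl
        rw [ps_snoc] at this
        simp only [lt_irrefl, if_neg] at this
        simpa using this
    · rintro ⟨hd, -⟩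
      intro i hi
      rw [ps_snoc]
      simpa [Nat.not_lt.2 hi] using hd i hi
  have e1 : {p : (Fin m → Fin 2) × (Fin (m + 1) → Fin 2) //
      ∀ i, i ≤ m → ps p.2 i ≤ ps p.1 i} ≃
      Fin 2 × {q : (Fin m → Fin 2) × (Fin m → Fin 2) // Cond m 0 q} :=
    ((E.subtypeEquiv (fun p => by rw [Equiv.symm_apply_apply])).trans
      (Equiv.subtypeEquivRight key)).trans
      { toFun := fun x => (x.1.2.1, ⟨(x.1.1, x.1.2.2), x.2⟩)
        invFun := fun y => ⟨(y.2.1.1, (y.1, y.2.1.2)), y.2.2⟩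
        left_inv := fun x => rfl
        right_inv := fun y => rfl }
  rw [Nat.card_congr e1, Nat.card_prod]
  have h2 : Nat.card (Fin 2) = 2 := by simp
  have hM : Nat.card {q : (Fin m → Fin 2) × (Fin m → Fin 2) // Cond m 0 q} = M m 0 := rfl
  have hM0 : M m 0 = Nat.choose (2 * m + 1) m := by simpa using M_eq m 0
  have hc : Nat.choose (2 * (m + 1)) (m + 1) = 2 * Nat.choose (2 * m + 1) m := by
    rw [show 2 * (m + 1) = (2 * m + 1) + 1 by ring, Nat.choose_succ_succ']
    have := Nat.choose_symm_half m
    omega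
  rw [h2, hM, hM0, hc]
end

section
/- For positive integers p and m, the number of gapless rectangular shapes with p rows and m columns is equal to the number of p-branchings all of whose entries are less than or equal to m+1. -/
/-- A gapless rectangular shape with `p` rows and `m` columns: a 0/1 array `r i j`
(`1 ≤ i ≤ p`, `1 ≤ j ≤ m`, and `r i j = 0` outside this range) such that for all
`1 ≤ j < m` and `1 ≤ i ≤ p`, `∑_{k=i}^p r k j ≤ ∑_{k=i}^p r k (j+1)`. -/
def IsGaplessRect (p m : ℕ) (r : ℕ → ℕ → ℕ) : Prop :=
  (∀ i j, 1 ≤ i → i ≤ p → 1 ≤ j → j ≤ m → r i j = 0 ∨ r i j = 1) ∧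
  (∀ i j, i < 1 ∨ p < i ∨ j < 1 ∨ m < j → r i j = 0) ∧
  (∀ j, 1 ≤ j → j < m → ∀ i, 1 ≤ i → i ≤ p →
     ∑ k ∈ Finset.Icc i p, r k j ≤ ∑ k ∈ Finset.Icc i p, r k (j + 1))

/-- A `p`-branching: a triangular array of positive integers `b i j`
(`1 ≤ i ≤ p`, `1 ≤ j ≤ p + 1 - i`, and `b i j = 0` outside this range), weakly
increasing along rows and weakly decreasing down columns. -/
def IsPBranching (p : ℕ) (b : ℕ → ℕ → ℕ) : Prop :=
  (∀ i j, 1 ≤ i → i ≤ p → 1 ≤ j → j ≤ p + 1 - i → 1 ≤ b i j) ∧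
  (∀ i j, i < 1 ∨ p < i ∨ j < 1 ∨ p + 1 - i < j → b i j = 0) ∧
  (∀ i j, 1 ≤ i → i + 1 ≤ p → 1 ≤ j → j ≤ p + 1 - (i + 1) → b (i + 1) j ≤ b i j) ∧
  (∀ i j, 1 ≤ i → i ≤ p → 1 ≤ j → j + 1 ≤ p + 1 - i → b i j ≤ b i (j + 1))

namespace CardGapless

lemma antitone_of_step {f : ℕ → ℕ} {lo hi : ℕ}
    (h : ∀ k, lo ≤ k → k + 1 ≤ hi → f (k + 1) ≤ f k) :
    ∀ x y, lo ≤ x → x ≤ y → y ≤ hi → f y ≤ f x := by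
  intro x y hx hxy hy
  induction y, hxy using Nat.le_induction with
  | base => exact le_refl _
  | succ n hn ih => exact le_trans (h n (le_trans hx hn) hy) (ih (by omega))

lemma monotone_of_step {f : ℕ → ℕ} {lo hi : ℕ}
    (h : ∀ k, lo ≤ k → k + 1 ≤ hi → f k ≤ f (k + 1)) :
    ∀ x y, lo ≤ x → x ≤ y → y ≤ hi → f x ≤ f y := by
  intro x y hx hxy hy
  induction y, hxy using Nat.le_induction with
  | base => exact le_refl _
  | succ n hn ih => exact le_trans (ih (by omega)) (h n (le_trans hx hn) hy)

/-- suffix sum of column `l` starting at row `i`. -/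
def colSum (p : ℕ) (r : ℕ → ℕ → ℕ) (l i : ℕ) : ℕ := ∑ k ∈ Finset.Icc i p, r k l

/-- The forward map: gapless shape to branching. -/
def toB (p m : ℕ) (r : ℕ → ℕ → ℕ) (i j : ℕ) : ℕ :=
  if 1 ≤ i ∧ i ≤ p ∧ 1 ≤ j ∧ j ≤ p + 1 - i then
    ((Finset.Icc 1 m).filter (fun l => i ≤ colSum p r l (p + 2 - i - j))).card + 1
  else 0

/-- Recovered suffix sums from a branching. -/
def sFun (p m : ℕ) (b : ℕ → ℕ → ℕ) (l i : ℕ) : ℕ :=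
  ((Finset.Icc 1 (p + 1 - i)).filter (fun j => m + 2 - l ≤ b j (p + 2 - i - j))).card

/-- The inverse map: branching to gapless shape. -/
def toR (p m : ℕ) (b : ℕ → ℕ → ℕ) (i l : ℕ) : ℕ :=
  if 1 ≤ i ∧ i ≤ p ∧ 1 ≤ l ∧ l ≤ m then sFun p m b l i - sFun p m b l (i + 1) else 0

section colSumLemmas

variable {p m : ℕ} {r : ℕ → ℕ → ℕ}

lemma colSum_split {l i : ℕ} (h : i ≤ p) :
    colSum p r l i = r i l + colSum p r l (i + 1) := by
  unfold colSum
  have he : Finset.Icc i p = insert i (Finset.Icc (i + 1) p) := by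
    ext x; simp only [Finset.mem_Icc, Finset.mem_insert]; omega
  rw [he, Finset.sum_insert (by simp [Finset.mem_Icc])]

lemma colSum_empty {l i : ℕ} (h : p < i) : colSum p r l i = 0 := by
  unfold colSum
  rw [Finset.Icc_eq_empty (by omega), Finset.sum_empty]

lemma colSum_anti {l i i' : ℕ} (h : i ≤ i') : colSum p r l i' ≤ colSum p r l i :=
  Finset.sum_le_sum_of_subset (Finset.Icc_subset_Icc_left h)

lemma entry_le_one (hr : IsGaplessRect p m r) {i l : ℕ} (hi1 : 1 ≤ i) (hi2 : i ≤ p)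
    (hl1 : 1 ≤ l) (hl2 : l ≤ m) : r i l ≤ 1 := by
  rcases hr.1 i l hi1 hi2 hl1 hl2 with h | h <;> omega

lemma colSum_step (hr : IsGaplessRect p m r) {l i : ℕ} (hi1 : 1 ≤ i) (hi2 : i ≤ p)
    (hl1 : 1 ≤ l) (hl2 : l ≤ m) : colSum p r l i ≤ colSum p r l (i + 1) + 1 := by
  have := colSum_split (r := r) (l := l) hi2
  have := entry_le_one hr hi1 hi2 hl1 hl2
  omega

lemma colSum_le (hr : IsGaplessRect p m r) {l i : ℕ} (hi1 : 1 ≤ i)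
    (hl1 : 1 ≤ l) (hl2 : l ≤ m) : colSum p r l i ≤ p + 1 - i := by
  calc colSum p r l i ≤ ∑ k ∈ Finset.Icc i p, 1 := by
        apply Finset.sum_le_sum
        intro k hk
        simp only [Finset.mem_Icc] at hk
        exact entry_le_one hr (by omega) hk.2 hl1 hl2
    _ = p + 1 - i := by rw [Finset.sum_const, smul_eq_mul, mul_one, Nat.card_Icc]

lemma colSum_mono_l (hr : IsGaplessRect p m r) {l l' i : ℕ} (hl1 : 1 ≤ l) (hll : l ≤ l')
    (hl2 : l' ≤ m) (hi : 1 ≤ i) : colSum p r l i ≤ colSum p r l' i := by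
  refine monotone_of_step (f := fun l => colSum p r l i) (lo := 1) (hi := m) ?_ l l' hl1 hll hl2
  intro k hk1 hk2
  by_cases hip : i ≤ p
  · exact hr.2.2 k hk1 (by omega) i hi hip
  · show colSum p r k i ≤ colSum p r (k + 1) i
    rw [colSum_empty (by omega), colSum_empty (by omega)]

end colSumLemmas

section toBLemmas

variable {p m : ℕ} {r : ℕ → ℕ → ℕ}

lemma toB_branching (hr : IsGaplessRect p m r) : IsPBranching p (toB p m r) := by
  refine ⟨?_, ?_, ?_, ?_⟩
  · intro i j hi1 hi2 hj1 hj2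
    rw [toB, if_pos ⟨hi1, hi2, hj1, hj2⟩]; omega
  · intro i j h
    rw [toB, if_neg (by omega)]
  · -- columns weakly decreasing
    intro i j hi1 hi2 hj1 hj2
    rw [toB, if_pos ⟨by omega, hi2, hj1, by omega⟩, toB, if_pos ⟨hi1, by omega, hj1, by omega⟩]
    have hsub : ((Finset.Icc 1 m).filter
        (fun l => i + 1 ≤ colSum p r l (p + 2 - (i + 1) - j))) ⊆
        ((Finset.Icc 1 m).filter (fun l => i ≤ colSum p r l (p + 2 - i - j))) := by
      intro l hl
      simp only [Finset.mem_filter, Finset.mem_Icc] at hl ⊢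
      refine ⟨hl.1, ?_⟩
      have hrow : p + 2 - (i + 1) - j = p + 1 - i - j := by omega
      rw [hrow] at hl
      have hstep : colSum p r l (p + 1 - i - j) ≤ colSum p r l ((p + 1 - i - j) + 1) + 1 :=
        colSum_step hr (by omega) (by omega) hl.1.1 hl.1.2
      have : (p + 1 - i - j) + 1 = p + 2 - i - j := by omega
      rw [this] at hstep
      omega
    have := Finset.card_le_card hsub
    omega
  · -- rows weakly increasing
    intro i j hi1 hi2 hj1 hj2
    rw [toB, if_pos ⟨hi1, hi2, hj1, by omega⟩, toB, if_pos ⟨hi1, hi2, by omega, hj2⟩]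
    have hsub : ((Finset.Icc 1 m).filter (fun l => i ≤ colSum p r l (p + 2 - i - j))) ⊆
        ((Finset.Icc 1 m).filter (fun l => i ≤ colSum p r l (p + 2 - i - (j + 1)))) := by
      intro l hl
      simp only [Finset.mem_filter, Finset.mem_Icc] at hl ⊢
      refine ⟨hl.1, le_trans hl.2 (colSum_anti (by omega))⟩
    have := Finset.card_le_card hsub
    omega

lemma toB_le (i j : ℕ) : toB p m r i j ≤ m + 1 := by
  rw [toB]
  split
  · have := Finset.card_filter_le (Finset.Icc 1 m)
      (fun l => i ≤ colSum p r l (p + 2 - i - j))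
    rw [Nat.card_Icc] at this
    omega
  · omega

end toBLemmas

section sFunLemmas

variable {p m : ℕ} {b : ℕ → ℕ → ℕ}

lemma sFun_top : sFun p m b l (p + 1) = 0 := by
  rw [sFun]
  have : p + 1 - (p + 1) = 0 := by omega
  rw [this]
  simp

lemma sFun_anti (hb : IsPBranching p b) {l i : ℕ} (hi : 1 ≤ i) :
    sFun p m b l (i + 1) ≤ sFun p m b l i := by
  rw [sFun, sFun]
  apply Finset.card_le_card
  intro j hj
  simp only [Finset.mem_filter, Finset.mem_Icc] at hj ⊢
  obtain ⟨⟨hj1, hj2⟩, hjp⟩ := hj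
  have hj2' : j ≤ p - i := by omega
  refine ⟨⟨hj1, by omega⟩, ?_⟩
  have harg : p + 2 - (i + 1) - j = p + 1 - i - j := by omega
  rw [harg] at hjp
  have hmono : b j (p + 1 - i - j) ≤ b j ((p + 1 - i - j) + 1) := by
    apply hb.2.2.2 j (p + 1 - i - j) hj1 (by omega) (by omega) (by omega)
  have : (p + 1 - i - j) + 1 = p + 2 - i - j := by omega
  rw [this] at hmono
  exact le_trans hjp hmono

lemma sFun_step (hb : IsPBranching p b) {l i : ℕ} (hi : 1 ≤ i) :
    sFun p m b l i ≤ sFun p m b l (i + 1) + 1 := by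
  rw [sFun, sFun]
  set A := (Finset.Icc 1 (p + 1 - i)).filter (fun j => m + 2 - l ≤ b j (p + 2 - i - j)) with hA
  set B := (Finset.Icc 1 (p + 1 - (i + 1))).filter
      (fun j => m + 2 - l ≤ b j (p + 2 - (i + 1) - j)) with hB
  have hsub : A ⊆ insert 1 (B.image (· + 1)) := by
    intro j hj
    simp only [hA, Finset.mem_filter, Finset.mem_Icc] at hj
    obtain ⟨⟨hj1, hj2⟩, hjp⟩ := hj
    rcases Nat.eq_or_lt_of_le hj1 with h1 | h1
    · simp [← h1]
    · have hj1' : 2 ≤ j := h1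
      apply Finset.mem_insert_of_mem
      simp only [hB, Finset.mem_image, Finset.mem_filter, Finset.mem_Icc]
      refine ⟨j - 1, ⟨⟨by omega, by omega⟩, ?_⟩, by omega⟩
      have harg : p + 2 - (i + 1) - (j - 1) = p + 2 - i - j := by omega
      rw [harg]
      have hcol : b ((j - 1) + 1) (p + 2 - i - j) ≤ b (j - 1) (p + 2 - i - j) := by
        apply hb.2.2.1 (j - 1) (p + 2 - i - j) (by omega) (by omega) (by omega) (by omega)
      have : (j - 1) + 1 = j := by omega
      rw [this] at hcol
      exact le_trans hjp hcol
  calc A.card ≤ (insert 1 (B.image (· + 1))).card := Finset.card_le_card hsub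
    _ ≤ (B.image (· + 1)).card + 1 := Finset.card_insert_le _ _
    _ ≤ B.card + 1 := by
        have := Finset.card_image_le (s := B) (f := (· + 1))
        omega

lemma sFun_mono_l {l l' i : ℕ} (hll : l ≤ l') : sFun p m b l i ≤ sFun p m b l' i := by
  apply Finset.card_le_card
  intro j hj
  simp only [Finset.mem_filter] at hj ⊢
  exact ⟨hj.1, le_trans (by omega) hj.2⟩

lemma colSum_toR (hb : IsPBranching p b) {l : ℕ} (hl1 : 1 ≤ l) (hl2 : l ≤ m) :
    ∀ d, d ≤ p → colSum p (toR p m b) l (p + 1 - d) = sFun p m b l (p + 1 - d) := by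
  intro d
  induction d with
  | zero =>
      intro _
      simp only [Nat.sub_zero]
      rw [colSum_empty (by omega), sFun_top]
  | succ n ih =>
      intro hd
      have hi1 : 1 ≤ p - n := by omega
      have hstep : p + 1 - (n + 1) = p - n := by omega
      rw [hstep]
      rw [colSum_split (by omega)]
      have hsucc : (p - n) + 1 = p + 1 - n := by omega
      rw [hsucc, ih (by omega)]
      rw [toR, if_pos ⟨hi1, by omega, hl1, hl2⟩, hsucc]
      have := sFun_anti (m := m) (l := l) hb hi1
      rw [hsucc] at this
      omega

lemma colSum_toR' (hb : IsPBranching p b) {l i : ℕ} (hl1 : 1 ≤ l) (hl2 : l ≤ m)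
    (hi1 : 1 ≤ i) (hi2 : i ≤ p + 1) :
    colSum p (toR p m b) l i = sFun p m b l i := by
  have := colSum_toR (m := m) hb hl1 hl2 (p + 1 - i) (by omega)
  have h : p + 1 - (p + 1 - i) = i := by omega
  rwa [h] at this

lemma toR_gapless (hb : IsPBranching p b) : IsGaplessRect p m (toR p m b) := by
  refine ⟨?_, ?_, ?_⟩
  · intro i l hi1 hi2 hl1 hl2
    rw [toR, if_pos ⟨hi1, hi2, hl1, hl2⟩]
    have h1 := sFun_anti (m := m) (l := l) hb hi1
    have h2 := sFun_step (m := m) (l := l) hb hi1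
    omega
  · intro i l h
    rw [toR, if_neg (by omega)]
  · intro l hl1 hl2 i hi1 hi2
    have e1 : colSum p (toR p m b) l i = sFun p m b l i :=
      colSum_toR' hb hl1 (by omega) hi1 (by omega)
    have e2 : colSum p (toR p m b) (l + 1) i = sFun p m b (l + 1) i :=
      colSum_toR' hb (by omega) (by omega) hi1 (by omega)
    show colSum p (toR p m b) l i ≤ colSum p (toR p m b) (l + 1) i
    rw [e1, e2]
    exact sFun_mono_l (by omega)

end sFunLemmas

section RoundTrips

variable {p m : ℕ} {r b : ℕ → ℕ → ℕ}

lemma count_ge_iff (hr : IsGaplessRect p m r) {l i j : ℕ} (hl1 : 1 ≤ l) (hl2 : l ≤ m)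
    (hi : 1 ≤ i) (hj : 1 ≤ j) :
    m + 1 - l ≤ ((Finset.Icc 1 m).filter (fun l' => j ≤ colSum p r l' i)).card ↔
      j ≤ colSum p r l i := by
  constructor
  · intro hcard
    by_contra hcon
    push_neg at hcon
    have hsub : ((Finset.Icc 1 m).filter (fun l' => j ≤ colSum p r l' i)) ⊆
        Finset.Icc (l + 1) m := by
      intro l' hl'
      simp only [Finset.mem_filter, Finset.mem_Icc] at hl' ⊢
      obtain ⟨⟨h1, h2⟩, h3⟩ := hl'
      refine ⟨?_, h2⟩
      by_contra hc
      push_neg at hc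
      have := colSum_mono_l hr h1 (by omega) hl2 hi
      omega
    have := Finset.card_le_card hsub
    rw [Nat.card_Icc] at this
    omega
  · intro hle
    have hsub : Finset.Icc l m ⊆
        ((Finset.Icc 1 m).filter (fun l' => j ≤ colSum p r l' i)) := by
      intro l' hl'
      simp only [Finset.mem_Icc] at hl'
      simp only [Finset.mem_filter, Finset.mem_Icc]
      exact ⟨⟨by omega, hl'.2⟩, le_trans hle (colSum_mono_l hr hl1 hl'.1 hl'.2 hi)⟩
    have := Finset.card_le_card hsub
    rw [Nat.card_Icc] at this
    omega

lemma sFun_toB (hr : IsGaplessRect p m r) {l i : ℕ} (hl1 : 1 ≤ l) (hl2 : l ≤ m)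
    (hi1 : 1 ≤ i) (hi2 : i ≤ p + 1) :
    sFun p m (toB p m r) l i = colSum p r l i := by
  rw [sFun]
  have hpred : (Finset.Icc 1 (p + 1 - i)).filter
      (fun j => m + 2 - l ≤ toB p m r j (p + 2 - i - j)) =
      (Finset.Icc 1 (p + 1 - i)).filter (fun j => j ≤ colSum p r l i) := by
    apply Finset.filter_congr
    intro j hj
    simp only [Finset.mem_Icc] at hj
    obtain ⟨hj1, hj2⟩ := hj
    rw [toB, if_pos ⟨hj1, by omega, by omega, by omega⟩]
    have harg : p + 2 - j - (p + 2 - i - j) = i := by omega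
    rw [harg]
    have hiff := count_ge_iff hr (i := i) (j := j) hl1 hl2 hi1 hj1
    constructor
    · intro h
      rw [← hiff]
      omega
    · intro h
      rw [← hiff] at h
      omega
  rw [hpred]
  have hcs : colSum p r l i ≤ p + 1 - i := colSum_le hr hi1 hl1 hl2
  have hset : (Finset.Icc 1 (p + 1 - i)).filter (fun j => j ≤ colSum p r l i) =
      Finset.Icc 1 (colSum p r l i) := by
    ext x
    simp only [Finset.mem_filter, Finset.mem_Icc]
    omega
  rw [hset, Nat.card_Icc]
  omega

lemma toR_toB (hr : IsGaplessRect p m r) : toR p m (toB p m r) = r := by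
  funext i l
  by_cases h : 1 ≤ i ∧ i ≤ p ∧ 1 ≤ l ∧ l ≤ m
  · obtain ⟨hi1, hi2, hl1, hl2⟩ := h
    rw [toR, if_pos ⟨hi1, hi2, hl1, hl2⟩]
    rw [sFun_toB hr hl1 hl2 hi1 (by omega), sFun_toB hr hl1 hl2 (by omega) (by omega)]
    have := colSum_split (p := p) (r := r) (l := l) (i := i) hi2
    omega
  · rw [toR, if_neg h, eq_comm]
    exact hr.2.1 i l (by omega)

lemma antidiag_anti (hb : IsPBranching p b) {i j : ℕ} (hi : 1 ≤ i) (hj : 1 ≤ j)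
    (hij : i + j ≤ p + 1) :
    ∀ x y, 1 ≤ x → x ≤ y → y ≤ i + j - 1 → b y (i + j - y) ≤ b x (i + j - x) := by
  apply antitone_of_step (f := fun k => b k (i + j - k))
  intro k hk1 hk2
  have h1 : b (k + 1) (i + j - k - 1) ≤ b k (i + j - k - 1) :=
    hb.2.2.1 k (i + j - k - 1) hk1 (by omega) (by omega) (by omega)
  have h2 : b k (i + j - k - 1) ≤ b k ((i + j - k - 1) + 1) :=
    hb.2.2.2 k (i + j - k - 1) hk1 (by omega) (by omega) (by omega)
  have e1 : i + j - (k + 1) = i + j - k - 1 := by omega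
  have e2 : (i + j - k - 1) + 1 = i + j - k := by omega
  rw [e1]
  rw [e2] at h2
  exact le_trans h1 h2

lemma sFun_ge_iff (hb : IsPBranching p b) {l i j : ℕ} (hi : 1 ≤ i) (hj : 1 ≤ j)
    (hij : i + j ≤ p + 1) :
    i ≤ sFun p m b l (p + 2 - i - j) ↔ m + 2 - l ≤ b i j := by
  rw [sFun]
  have hrange : p + 1 - (p + 2 - i - j) = i + j - 1 := by omega
  rw [hrange]
  have hpred : (Finset.Icc 1 (i + j - 1)).filter
      (fun j' => m + 2 - l ≤ b j' (p + 2 - (p + 2 - i - j) - j')) =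
      (Finset.Icc 1 (i + j - 1)).filter (fun j' => m + 2 - l ≤ b j' (i + j - j')) := by
    apply Finset.filter_congr
    intro j' hj'
    simp only [Finset.mem_Icc] at hj'
    have : p + 2 - (p + 2 - i - j) - j' = i + j - j' := by omega
    rw [this]
  rw [hpred]
  constructor
  · intro hcard
    by_contra hcon
    push_neg at hcon
    have hsub : (Finset.Icc 1 (i + j - 1)).filter (fun j' => m + 2 - l ≤ b j' (i + j - j')) ⊆
        Finset.Icc 1 (i - 1) := by
      intro j' hj'
      simp only [Finset.mem_filter, Finset.mem_Icc] at hj' ⊢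
      obtain ⟨⟨h1, h2⟩, h3⟩ := hj'
      refine ⟨h1, ?_⟩
      by_contra hc
      push_neg at hc
      have hanti := antidiag_anti hb hi hj hij i j' (by omega) (by omega) h2
      have : i + j - i = j := by omega
      rw [this] at hanti
      omega
    have := Finset.card_le_card hsub
    rw [Nat.card_Icc] at this
    omega
  · intro hle
    have hsub : Finset.Icc 1 i ⊆
        (Finset.Icc 1 (i + j - 1)).filter (fun j' => m + 2 - l ≤ b j' (i + j - j')) := by
      intro j' hj'
      simp only [Finset.mem_Icc] at hj'
      simp only [Finset.mem_filter, Finset.mem_Icc]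
      refine ⟨⟨hj'.1, by omega⟩, ?_⟩
      have hanti := antidiag_anti hb hi hj hij j' i hj'.1 hj'.2 (by omega)
      have : i + j - i = j := by omega
      rw [this] at hanti
      exact le_trans hle hanti
    have := Finset.card_le_card hsub
    rw [Nat.card_Icc] at this
    omega

lemma toB_toR (hb : IsPBranching p b)
    (hbd : ∀ i j, 1 ≤ i → i ≤ p → 1 ≤ j → j ≤ p + 1 - i → b i j ≤ m + 1) :
    toB p m (toR p m b) = b := by
  funext i j
  by_cases h : 1 ≤ i ∧ i ≤ p ∧ 1 ≤ j ∧ j ≤ p + 1 - i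
  · obtain ⟨hi1, hi2, hj1, hj2⟩ := h
    rw [toB, if_pos ⟨hi1, hi2, hj1, hj2⟩]
    have hb1 : 1 ≤ b i j := hb.1 i j hi1 hi2 hj1 hj2
    have hb2 : b i j ≤ m + 1 := hbd i j hi1 hi2 hj1 hj2
    have hij : i + j ≤ p + 1 := by omega
    have hpred : (Finset.Icc 1 m).filter
        (fun l => i ≤ colSum p (toR p m b) l (p + 2 - i - j)) =
        (Finset.Icc 1 m).filter (fun l => m + 2 - b i j ≤ l) := by
      apply Finset.filter_congr
      intro l hl
      simp only [Finset.mem_Icc] at hl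
      rw [colSum_toR' hb hl.1 hl.2 (by omega) (by omega)]
      rw [sFun_ge_iff hb hi1 hj1 hij]
      constructor <;> (intro hx; omega)
    rw [hpred]
    have hset : (Finset.Icc 1 m).filter (fun l => m + 2 - b i j ≤ l) =
        Finset.Icc (m + 2 - b i j) m := by
      ext x
      simp only [Finset.mem_filter, Finset.mem_Icc]
      omega
    rw [hset, Nat.card_Icc]
    omega
  · rw [toB, if_neg h, eq_comm]
    exact hb.2.1 i j (by omega)

end RoundTrips

end CardGapless


/-- The number of gapless rectangular shapes with `p` rows and `m` columns equals the
number of `p`-branchings all of whose entries are at most `m + 1`. -/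
theorem card_gapless_rect_eq_card_branchings (p m : ℕ) (hp : 1 ≤ p) (hm : 1 ≤ m) :
    Nat.card {r : ℕ → ℕ → ℕ // IsGaplessRect p m r} =
    Nat.card {b : ℕ → ℕ → ℕ // IsPBranching p b ∧
      ∀ i j, 1 ≤ i → i ≤ p → 1 ≤ j → j ≤ p + 1 - i → b i j ≤ m + 1} := by
  apply Nat.card_congr
  exact {
    toFun := fun r => ⟨CardGapless.toB p m r.1,
      CardGapless.toB_branching r.2, fun i j _ _ _ _ => CardGapless.toB_le i j⟩
    invFun := fun b => ⟨CardGapless.toR p m b.1, CardGapless.toR_gapless b.2.1⟩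
    left_inv := fun r => Subtype.ext (CardGapless.toR_toB r.2)
    right_inv := fun b => Subtype.ext (CardGapless.toB_toR b.2.1 b.2.2) }
end

section
/- Let p, m be integers not less than 1. The number of p-branchings with all entries at most m is equal to the number of semi-standard Young tableaux with entries in {1, 2, ..., p} having fewer than m columns. -/
/-- A semi-standard Young tableau, modelled as a filling `t i j` (`i, j ≥ 1`) with
positive entries on a Young-diagram-shaped support (`t i j = 0` outside the diagram,
`t i j ≥ 1` inside), weakly increasing along rows and strictly increasing down
columns. The empty tableau is allowed. -/
def IsSSYT (t : ℕ → ℕ → ℕ) : Prop :=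
  (∀ i j, i < 1 ∨ j < 1 → t i j = 0) ∧
  (∀ i j, 1 ≤ i → 1 ≤ j → 1 ≤ t i (j + 1) → 1 ≤ t i j) ∧
  (∀ i j, 1 ≤ i → 1 ≤ j → 1 ≤ t (i + 1) j → 1 ≤ t i j) ∧
  (∀ i j, 1 ≤ i → 1 ≤ j → 1 ≤ t i (j + 1) → t i j ≤ t i (j + 1)) ∧
  (∀ i j, 1 ≤ i → 1 ≤ j → 1 ≤ t (i + 1) j → t i j < t (i + 1) j)


namespace CardBranchAux

/-- number of entries `≥ r+1` in row `i` of `b`. -/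
def cc (p : ℕ) (b : ℕ → ℕ → ℕ) (i r : ℕ) : ℕ :=
  ((Finset.Icc 1 p).filter fun j => r + 1 ≤ b i j).card

def toT (p : ℕ) (b : ℕ → ℕ → ℕ) : ℕ → ℕ → ℕ := fun i r =>
  if 1 ≤ r ∧ 1 ≤ cc p b i r then p + 1 - cc p b i r else 0

def nn (m : ℕ) (t : ℕ → ℕ → ℕ) (i j : ℕ) : ℕ :=
  ((Finset.Icc 1 (m - 1)).filter fun r => 1 ≤ t i r ∧ t i r + 1 ≤ i + j).card

def toB (p m : ℕ) (t : ℕ → ℕ → ℕ) : ℕ → ℕ → ℕ := fun i j =>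
  if 1 ≤ i ∧ i ≤ p ∧ 1 ≤ j ∧ j ≤ p + 1 - i then 1 + nn m t i j else 0

section Branch
variable {p m : ℕ} {b : ℕ → ℕ → ℕ}

lemma row_mono (hb : IsPBranching p b) {i j1 j2 : ℕ} (hi1 : 1 ≤ i) (hip : i ≤ p)
    (hj1 : 1 ≤ j1) (h12 : j1 ≤ j2) (hj2 : j2 ≤ p + 1 - i) : b i j1 ≤ b i j2 := by
  induction j2, h12 using Nat.le_induction with
  | base => exact le_rfl
  | succ n hn ih =>
      exact (ih (by omega)).trans (hb.2.2.2 i n hi1 hip (by omega) hj2)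

lemma b_le_m (hb : IsPBranching p b)
    (hbm : ∀ i j, 1 ≤ i → i ≤ p → 1 ≤ j → j ≤ p + 1 - i → b i j ≤ m) :
    ∀ i j, b i j ≤ m := by
  intro i j
  by_cases h : 1 ≤ i ∧ i ≤ p ∧ 1 ≤ j ∧ j ≤ p + 1 - i
  · exact hbm i j h.1 h.2.1 h.2.2.1 h.2.2.2
  · have := hb.2.1 i j (by omega)
    omega

lemma cc_le_p : cc p b i r ≤ p := by
  have h := Finset.card_le_card (Finset.filter_subset (fun j => r + 1 ≤ b i j) (Finset.Icc 1 p))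
  simpa [cc] using h

lemma cc_le (hb : IsPBranching p b) {i : ℕ} (r : ℕ) : cc p b i r ≤ p + 1 - i := by
  have hsub : ((Finset.Icc 1 p).filter fun j => r + 1 ≤ b i j) ⊆ Finset.Icc 1 (p + 1 - i) := by
    intro j hj
    simp only [Finset.mem_filter, Finset.mem_Icc] at hj ⊢
    rcases hj with ⟨⟨h1, h2⟩, h3⟩
    refine ⟨h1, ?_⟩
    by_contra hc
    have := hb.2.1 i j (by omega)
    omega
  have := Finset.card_le_card hsub
  simpa [cc] using this

lemma cc_zero_outside (hb : IsPBranching p b) {i : ℕ} (hi : i < 1 ∨ p < i) (r : ℕ) :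
    cc p b i r = 0 := by
  rw [cc, Finset.card_eq_zero, Finset.filter_eq_empty_iff]
  intro j _
  have := hb.2.1 i j (by omega)
  omega

lemma cc_anti (hb : IsPBranching p b) {i r1 r2 : ℕ} (h : r1 ≤ r2) :
    cc p b i r2 ≤ cc p b i r1 := by
  apply Finset.card_le_card
  intro j hj
  simp only [Finset.mem_filter] at hj ⊢
  exact ⟨hj.1, by omega⟩

lemma cc_zero_of_m (hb : IsPBranching p b)
    (hbm : ∀ i j, 1 ≤ i → i ≤ p → 1 ≤ j → j ≤ p + 1 - i → b i j ≤ m)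
    {i r : ℕ} (hr : m ≤ r) : cc p b i r = 0 := by
  rw [cc, Finset.card_eq_zero, Finset.filter_eq_empty_iff]
  intro j _
  have := b_le_m hb hbm i j
  omega

/-- key "suffix" characterisation: within row `i`, the entries `≥ r+1` occupy
exactly the last `cc p b i r` positions. -/
lemma suffix_iff (hb : IsPBranching p b) {i j : ℕ} (hi1 : 1 ≤ i) (hip : i ≤ p)
    (hj1 : 1 ≤ j) (hj2 : j ≤ p + 1 - i) (r : ℕ) :
    r + 1 ≤ b i j ↔ p + 1 - i - cc p b i r < j := by
  constructor
  · intro h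
    have hsub : Finset.Icc j (p + 1 - i) ⊆ (Finset.Icc 1 p).filter fun j' => r + 1 ≤ b i j' := by
      intro j' hj'
      simp only [Finset.mem_Icc] at hj'
      simp only [Finset.mem_filter, Finset.mem_Icc]
      exact ⟨⟨by omega, by omega⟩, h.trans (row_mono hb hi1 hip hj1 hj'.1 hj'.2)⟩
    have hcard := Finset.card_le_card hsub
    rw [Nat.card_Icc] at hcard
    have : p + 1 - i + 1 - j ≤ cc p b i r := hcard
    omega
  · intro h
    by_contra hnot
    push_neg at hnot
    have hsub : ((Finset.Icc 1 p).filter fun j' => r + 1 ≤ b i j') ⊆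
        Finset.Icc (j + 1) (p + 1 - i) := by
      intro j' hj'
      simp only [Finset.mem_filter, Finset.mem_Icc] at hj'
      simp only [Finset.mem_Icc]
      constructor
      · by_contra hc
        have : b i j' ≤ b i j := row_mono hb hi1 hip hj'.1.1 (by omega) hj2
        omega
      · by_contra hc
        have := hb.2.1 i j' (by omega)
        omega
    have hcard := Finset.card_le_card hsub
    rw [Nat.card_Icc] at hcard
    have hle : cc p b i r ≤ p + 1 - i - j := by
      have : cc p b i r ≤ p + 1 - i + 1 - (j + 1) := hcard
      omega
    omega

lemma cc_strict (hb : IsPBranching p b) {i r : ℕ} (hi1 : 1 ≤ i) (hip : i + 1 ≤ p)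
    (hpos : 1 ≤ cc p b (i + 1) r) : cc p b (i + 1) r + 1 ≤ cc p b i r := by
  set c' := cc p b (i + 1) r with hc'
  have hc'le : c' ≤ p - i := by
    have := cc_le hb (i := i + 1) (b := b) r
    omega
  have hsub : Finset.Icc (p + 1 - i - c') (p + 1 - i) ⊆
      (Finset.Icc 1 p).filter fun j' => r + 1 ≤ b i j' := by
    intro j' hj'
    simp only [Finset.mem_Icc] at hj'
    simp only [Finset.mem_filter, Finset.mem_Icc]
    have hj'1 : 1 ≤ j' := by omega
    refine ⟨⟨hj'1, by omega⟩, ?_⟩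
    by_cases hcase : j' ≤ p - i
    · have hb1 : r + 1 ≤ b (i + 1) j' := by
        rw [suffix_iff hb (by omega) (by omega) hj'1 (by omega) r]
        omega
      exact hb1.trans (hb.2.2.1 i j' hi1 hip hj'1 (by omega))
    · -- j' = p + 1 - i
      have hpi : 1 ≤ p - i := by omega
      have hb1 : r + 1 ≤ b (i + 1) (p - i) := by
        rw [suffix_iff hb (i := i + 1) (by omega) (by omega) hpi (by omega) r]
        omega
      have hb2 : b (i + 1) (p - i) ≤ b i (p - i) := hb.2.2.1 i (p - i) hi1 hip hpi (by omega)
      have hb3 : b i (p - i) ≤ b i j' := row_mono hb hi1 (by omega) hpi (by omega) (by omega)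
      omega
  have hcard := Finset.card_le_card hsub
  rw [Nat.card_Icc] at hcard
  have : c' + 1 ≤ p + 1 - i + 1 - (p + 1 - i - c') := by omega
  exact this.trans hcard

end Branch

section SSYT
variable {p m : ℕ} {t : ℕ → ℕ → ℕ}

lemma entry_ge_row (ht : IsSSYT t) {r : ℕ} (hr : 1 ≤ r) :
    ∀ i, 1 ≤ t i r → i ≤ t i r := by
  intro i
  induction i with
  | zero => intro _; omega
  | succ n ih =>
      intro hpos
      by_cases hn : 1 ≤ n
      · have h1 : 1 ≤ t n r := ht.2.2.1 n r hn hr hpos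
        have h2 : t n r < t (n + 1) r := ht.2.2.2.2 n r hn hr hpos
        have := ih h1
        omega
      · omega

lemma prefix_mono (ht : IsSSYT t) {i r1 r2 : ℕ} (hi : 1 ≤ i) (h1 : 1 ≤ r1)
    (h12 : r1 ≤ r2) (hpos : 1 ≤ t i r2) : 1 ≤ t i r1 ∧ t i r1 ≤ t i r2 := by
  induction r2, h12 using Nat.le_induction with
  | base => exact ⟨hpos, le_rfl⟩
  | succ n hn ih =>
      have hp : 1 ≤ t i n := ht.2.1 i n hi (by omega) hpos
      have hle : t i n ≤ t i (n + 1) := ht.2.2.2.1 i n hi (by omega) hpos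
      have := ih hp
      exact ⟨this.1, this.2.trans hle⟩

lemma entry_zero_of_row_gt (ht : IsSSYT t) (htp : ∀ i j, t i j ≤ p) {i r : ℕ}
    (hi : p < i) : t i r = 0 := by
  by_cases hr : 1 ≤ r
  · by_contra h
    have hpos : 1 ≤ t i r := by omega
    have := entry_ge_row ht hr i hpos
    have := htp i r
    omega
  · exact ht.1 i r (by omega)

end SSYT

section Maps
variable {p m : ℕ} {b t : ℕ → ℕ → ℕ}

lemma toT_spec (hb : IsPBranching p b)
    (hbm : ∀ i j, 1 ≤ i → i ≤ p → 1 ≤ j → j ≤ p + 1 - i → b i j ≤ m) :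
    IsSSYT (toT p b) ∧ (∀ i j, toT p b i j ≤ p) ∧ (∀ i j, m ≤ j → toT p b i j = 0) := by
  have hposiff : ∀ i r, 1 ≤ toT p b i r ↔ (1 ≤ r ∧ 1 ≤ cc p b i r) := by
    intro i r
    unfold toT
    split
    · rename_i h
      have : cc p b i r ≤ p := cc_le_p
      constructor
      · intro _; exact h
      · intro _; omega
    · rename_i h
      constructor
      · omega
      · intro hh; exact absurd hh h
  have hval : ∀ i r, (1 ≤ r ∧ 1 ≤ cc p b i r) → toT p b i r = p + 1 - cc p b i r := by
    intro i r h; unfold toT; rw [if_pos h]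
  have hrowp : ∀ {i r}, 1 ≤ cc p b i r → (1 ≤ i ∧ i ≤ p) := by
    intro i r h
    by_contra hc
    have := cc_zero_outside hb (i := i) (by omega) r
    omega
  refine ⟨⟨?_, ?_, ?_, ?_, ?_⟩, ?_, ?_⟩
  · intro i r h
    rcases h with h | h
    · unfold toT
      rw [if_neg]
      rintro ⟨-, hcc⟩
      have := cc_zero_outside hb (i := i) (by omega) r
      omega
    · unfold toT
      rw [if_neg]; omega
  · intro i r hi hr hpos
    rw [hposiff] at hpos ⊢
    exact ⟨hr, le_trans hpos.2 (cc_anti hb (by omega))⟩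
  · intro i r hi hr hpos
    rw [hposiff] at hpos ⊢
    refine ⟨hr, ?_⟩
    have hip : i + 1 ≤ p := (hrowp hpos.2).2
    have := cc_strict hb hi hip hpos.2
    omega
  · intro i r hi hr hpos
    rw [hposiff] at hpos
    have h1 : 1 ≤ cc p b i r := le_trans hpos.2 (cc_anti hb (by omega))
    rw [hval i r ⟨hr, h1⟩, hval i (r + 1) ⟨by omega, hpos.2⟩]
    have := cc_anti hb (i := i) (b := b) (show r ≤ r + 1 by omega)
    have : cc p b i r ≤ p := cc_le_p
    omega
  · intro i r hi hr hpos
    rw [hposiff] at hpos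
    have hip : i + 1 ≤ p := (hrowp hpos.2).2
    have hstr := cc_strict hb hi hip hpos.2
    rw [hval i r ⟨hr, by omega⟩, hval (i + 1) r ⟨hr, hpos.2⟩]
    have : cc p b i r ≤ p := cc_le_p
    omega
  · intro i r
    unfold toT
    split
    · rename_i h; omega
    · omega
  · intro i r hr
    unfold toT
    rw [if_neg]
    rintro ⟨-, hcc⟩
    have := cc_zero_of_m hb hbm (i := i) hr
    omega

lemma nn_le (m : ℕ) (t : ℕ → ℕ → ℕ) (i j : ℕ) : nn m t i j ≤ m - 1 := by
  have h := Finset.card_le_card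
    (Finset.filter_subset (fun r => 1 ≤ t i r ∧ t i r + 1 ≤ i + j) (Finset.Icc 1 (m - 1)))
  simpa [nn] using h

lemma toB_spec (ht : IsSSYT t) (htp : ∀ i j, t i j ≤ p)
    (htm : ∀ i j, m ≤ j → t i j = 0) (hm : 1 ≤ m) :
    IsPBranching p (toB p m t) ∧
      (∀ i j, 1 ≤ i → i ≤ p → 1 ≤ j → j ≤ p + 1 - i → toB p m t i j ≤ m) := by
  refine ⟨⟨?_, ?_, ?_, ?_⟩, ?_⟩
  · intro i j h1 h2 h3 h4
    unfold toB
    rw [if_pos ⟨h1, h2, h3, h4⟩]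
    omega
  · intro i j h
    unfold toB
    rw [if_neg]; omega
  · intro i j h1 h2 h3 h4
    unfold toB
    rw [if_pos ⟨by omega, by omega, h3, h4⟩, if_pos ⟨h1, by omega, h3, by omega⟩]
    have hsub : ((Finset.Icc 1 (m - 1)).filter fun r => 1 ≤ t (i + 1) r ∧ t (i + 1) r + 1 ≤ i + 1 + j)
        ⊆ (Finset.Icc 1 (m - 1)).filter fun r => 1 ≤ t i r ∧ t i r + 1 ≤ i + j := by
      intro r hr
      simp only [Finset.mem_filter, Finset.mem_Icc] at hr ⊢
      rcases hr with ⟨hmem, hpos, hle⟩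
      have h1' : 1 ≤ t i r := ht.2.2.1 i r h1 hmem.1 hpos
      have h2' : t i r < t (i + 1) r := ht.2.2.2.2 i r h1 hmem.1 hpos
      exact ⟨hmem, h1', by omega⟩
    have := Finset.card_le_card hsub
    simp only [nn]
    omega
  · intro i j h1 h2 h3 h4
    unfold toB
    rw [if_pos ⟨h1, h2, h3, by omega⟩, if_pos ⟨h1, h2, by omega, h4⟩]
    have hsub : ((Finset.Icc 1 (m - 1)).filter fun r => 1 ≤ t i r ∧ t i r + 1 ≤ i + j)
        ⊆ (Finset.Icc 1 (m - 1)).filter fun r => 1 ≤ t i r ∧ t i r + 1 ≤ i + (j + 1) := by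
      intro r hr
      simp only [Finset.mem_filter] at hr ⊢
      exact ⟨hr.1, hr.2.1, by omega⟩
    have := Finset.card_le_card hsub
    simp only [nn]
    omega
  · intro i j h1 h2 h3 h4
    unfold toB
    rw [if_pos ⟨h1, h2, h3, h4⟩]
    have := nn_le m t i j
    omega

end Maps
section RoundTrip
variable {p m : ℕ} {b t : ℕ → ℕ → ℕ}

lemma toB_toT (hb : IsPBranching p b)
    (hbm : ∀ i j, 1 ≤ i → i ≤ p → 1 ≤ j → j ≤ p + 1 - i → b i j ≤ m) (hm : 1 ≤ m) :
    toB p m (toT p b) = b := by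
  funext i j
  by_cases h : 1 ≤ i ∧ i ≤ p ∧ 1 ≤ j ∧ j ≤ p + 1 - i
  · have hbij_le : b i j ≤ m := hbm i j h.1 h.2.1 h.2.2.1 h.2.2.2
    have hbij_ge : 1 ≤ b i j := hb.1 i j h.1 h.2.1 h.2.2.1 h.2.2.2
    have hj2 := h.2.2.2
    have key : ∀ r, 1 ≤ r →
        ((1 ≤ toT p b i r ∧ toT p b i r + 1 ≤ i + j) ↔ r + 1 ≤ b i j) := by
      intro r hr
      have hcp : cc p b i r ≤ p := cc_le_p
      have hs := suffix_iff hb h.1 h.2.1 h.2.2.1 h.2.2.2 r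
      by_cases hc1 : 1 ≤ cc p b i r
      · have hval : toT p b i r = p + 1 - cc p b i r := by
          simp only [toT]; rw [if_pos ⟨hr, hc1⟩]
        rw [hval, hs]
        omega
      · have hval : toT p b i r = 0 := by
          simp only [toT]; rw [if_neg (by omega)]
        rw [hval, hs]
        omega
    have hset : ((Finset.Icc 1 (m - 1)).filter
          fun r => 1 ≤ toT p b i r ∧ toT p b i r + 1 ≤ i + j) = Finset.Icc 1 (b i j - 1) := by
      ext r
      simp only [Finset.mem_filter, Finset.mem_Icc]
      constructor
      · rintro ⟨⟨hr1, hr2⟩, hcond⟩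
        have := (key r hr1).1 hcond
        omega
      · rintro ⟨hr1, hr2⟩
        exact ⟨⟨hr1, by omega⟩, (key r hr1).2 (by omega)⟩
    have hnn : nn m (toT p b) i j = b i j - 1 := by
      rw [nn, hset, Nat.card_Icc]
      omega
    show toB p m (toT p b) i j = b i j
    rw [toB]
    rw [if_pos h, hnn]
    omega
  · have hb0 : b i j = 0 := hb.2.1 i j (by omega)
    show toB p m (toT p b) i j = b i j
    rw [toB]
    rw [if_neg h, hb0]

lemma toT_toB (ht : IsSSYT t) (htp : ∀ i j, t i j ≤ p)
    (htm : ∀ i j, m ≤ j → t i j = 0) (hm : 1 ≤ m) :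
    toT p (toB p m t) = t := by
  have hb' := toB_spec (p := p) ht htp htm hm
  funext i r
  by_cases hr : 1 ≤ r
  swap
  · have h0 : t i r = 0 := ht.1 i r (by omega)
    show toT p (toB p m t) i r = t i r
    rw [toT]
    rw [if_neg (by omega), h0]
  by_cases hi : 1 ≤ i ∧ i ≤ p
  swap
  · have hcc : cc p (toB p m t) i r = 0 := cc_zero_outside hb'.1 (by omega) r
    have h0 : t i r = 0 := by
      by_cases hi0 : i < 1
      · exact ht.1 i r (Or.inl hi0)
      · exact entry_zero_of_row_gt ht htp (by omega)
    show toT p (toB p m t) i r = t i r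
    rw [toT]
    rw [if_neg (by omega), h0]
  by_cases hrm : m ≤ r
  · have hcc : cc p (toB p m t) i r = 0 := cc_zero_of_m hb'.1 hb'.2 hrm
    have h0 : t i r = 0 := htm i r hrm
    show toT p (toB p m t) i r = t i r
    rw [toT]
    rw [if_neg (by omega), h0]
  -- main case : 1 ≤ i ≤ p, 1 ≤ r ≤ m - 1
  have hrm1 : r ≤ m - 1 := by omega
  have subiff : ∀ j, 1 ≤ j → j ≤ p + 1 - i →
      (r ≤ nn m t i j ↔ (1 ≤ t i r ∧ t i r + 1 ≤ i + j)) := by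
    intro j hj1 hj2
    constructor
    · intro hrn
      by_contra hc
      have hsub : ((Finset.Icc 1 (m - 1)).filter fun r' => 1 ≤ t i r' ∧ t i r' + 1 ≤ i + j)
          ⊆ Finset.Icc 1 (r - 1) := by
        intro r' hr'
        simp only [Finset.mem_filter, Finset.mem_Icc] at hr'
        simp only [Finset.mem_Icc]
        rcases hr' with ⟨⟨h1, h2⟩, hp', hl'⟩
        refine ⟨h1, ?_⟩
        by_contra hge
        have pm := prefix_mono ht hi.1 hr (by omega) hp'
        exact hc ⟨pm.1, by omega⟩
      have hcard := Finset.card_le_card hsub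
      rw [Nat.card_Icc] at hcard
      rw [nn] at hrn
      omega
    · rintro ⟨hpos, hle⟩
      have hsub : Finset.Icc 1 r ⊆
          (Finset.Icc 1 (m - 1)).filter fun r' => 1 ≤ t i r' ∧ t i r' + 1 ≤ i + j := by
        intro r' hr'
        simp only [Finset.mem_Icc] at hr'
        simp only [Finset.mem_filter, Finset.mem_Icc]
        have pm := prefix_mono ht hi.1 hr'.1 hr'.2 hpos
        exact ⟨⟨hr'.1, by omega⟩, pm.1, by omega⟩
      have hcard := Finset.card_le_card hsub
      rw [Nat.card_Icc] at hcard
      rw [nn]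
      omega
  have hguard : ∀ j, r + 1 ≤ toB p m t i j → (1 ≤ j ∧ j ≤ p + 1 - i) := by
    intro j hj
    by_contra hcj
    have : toB p m t i j = 0 := by
      rw [toB]; rw [if_neg (by omega)]
    omega
  have hval : ∀ j, 1 ≤ j → j ≤ p + 1 - i → toB p m t i j = 1 + nn m t i j := by
    intro j hj1 hj2
    rw [toB]; rw [if_pos ⟨hi.1, hi.2, hj1, hj2⟩]
  by_cases hpos : 1 ≤ t i r
  · set v := t i r with hv
    have hvi : i ≤ v := entry_ge_row ht hr i hpos
    have hvp : v ≤ p := htp i r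
    have hset : ((Finset.Icc 1 p).filter fun j => r + 1 ≤ toB p m t i j)
        = Finset.Icc (v + 1 - i) (p + 1 - i) := by
      ext j
      simp only [Finset.mem_filter, Finset.mem_Icc]
      constructor
      · rintro ⟨⟨h1, h2⟩, hbj⟩
        have hg := hguard j hbj
        rw [hval j hg.1 hg.2] at hbj
        have := (subiff j hg.1 hg.2).1 (by omega)
        exact ⟨by omega, hg.2⟩
      · rintro ⟨h1, h2⟩
        have hj1 : 1 ≤ j := by omega
        refine ⟨⟨hj1, by omega⟩, ?_⟩
        rw [hval j hj1 h2]
        have := (subiff j hj1 h2).2 ⟨hpos, by omega⟩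
        omega
    have hcc : cc p (toB p m t) i r = p + 1 - v := by
      rw [cc, hset, Nat.card_Icc]
      omega
    show toT p (toB p m t) i r = t i r
    rw [toT]
    rw [if_pos ⟨hr, by omega⟩, hcc]
    omega
  · have hcc : cc p (toB p m t) i r = 0 := by
      rw [cc, Finset.card_eq_zero, Finset.filter_eq_empty_iff]
      intro j hj
      simp only [Finset.mem_Icc] at hj
      intro hbj
      have hg := hguard j hbj
      rw [hval j hg.1 hg.2] at hbj
      have := (subiff j hg.1 hg.2).1 (by omega)
      omega
    show toT p (toB p m t) i r = t i r
    rw [toT]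
    rw [if_neg (by omega)]
    omega

end RoundTrip
end CardBranchAux

/-- For `p, m ≥ 1`, the number of `p`-branchings with all entries at most `m` equals
the number of semi-standard Young tableaux with entries in `{1, …, p}` having fewer
than `m` columns (i.e. every row has length at most `m - 1`). -/
theorem card_branchings_eq_card_ssyt (p m : ℕ) (hp : 1 ≤ p) (hm : 1 ≤ m) :
    Nat.card {b : ℕ → ℕ → ℕ // IsPBranching p b ∧
        ∀ i j, 1 ≤ i → i ≤ p → 1 ≤ j → j ≤ p + 1 - i → b i j ≤ m} =
    Nat.card {t : ℕ → ℕ → ℕ // IsSSYT t ∧ (∀ i j, t i j ≤ p) ∧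
        (∀ i j, m ≤ j → t i j = 0)} := by
  exact Nat.card_congr
    { toFun := fun x => ⟨CardBranchAux.toT p x.1,
        (CardBranchAux.toT_spec x.2.1 x.2.2).1,
        (CardBranchAux.toT_spec x.2.1 x.2.2).2.1,
        (CardBranchAux.toT_spec x.2.1 x.2.2).2.2⟩
      invFun := fun y => ⟨CardBranchAux.toB p m y.1,
        (CardBranchAux.toB_spec y.2.1 y.2.2.1 y.2.2.2 hm).1,
        (CardBranchAux.toB_spec y.2.1 y.2.2.1 y.2.2.2 hm).2⟩
      left_inv := fun x => Subtype.ext (CardBranchAux.toB_toT x.2.1 x.2.2 hm)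
      right_inv := fun y => Subtype.ext (CardBranchAux.toT_toB y.2.1 y.2.2.1 y.2.2.2 hm) }
end

section
/- Let a_n denote the number of gapless triangular shapes of size n and ρ_{m,p} the number of gapless rectangular shapes with p rows and m columns. Then for every integer k with 1 ≤ k < n, the inequality a_n ≥ ρ_{n-k,k} · a_{n-k} holds. -/
/-- A gapless triangular shape of size `n`: a 0/1 triangular array `s i j`
(`1 ≤ j ≤ i ≤ n`, with `s i j = 0` outside this range) whose column words
`f^(j) k = s (n+1-k) (n+1-j)` (for `1 ≤ k ≤ j`) satisfy, for each `1 ≤ j ≤ n-1`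
and each `1 ≤ i ≤ j`, `∑_{k=1}^i f^(j) k ≥ ∑_{k=1}^i f^(j+1) k`. -/
def IsGaplessTriShape (n : ℕ) (s : ℕ → ℕ → ℕ) : Prop :=
  (∀ i j, 1 ≤ j → j ≤ i → i ≤ n → s i j = 0 ∨ s i j = 1) ∧
  (∀ i j, j < 1 ∨ i < j ∨ n < i → s i j = 0) ∧
  (∀ j, 1 ≤ j → j + 1 ≤ n → ∀ i, 1 ≤ i → i ≤ j →
     ∑ k ∈ Finset.Icc 1 i, s (n + 1 - k) (n - j) ≤
       ∑ k ∈ Finset.Icc 1 i, s (n + 1 - k) (n + 1 - j))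

/-- The embedding of a rectangle (k rows, m cols) and a small triangle (size m)
into a triangle of size m + k. -/
def triEmbed (m k : ℕ) (r t : ℕ → ℕ → ℕ) : ℕ → ℕ → ℕ :=
  fun i j =>
    if 1 ≤ j ∧ j ≤ i ∧ i ≤ m + k then
      (if j ≤ m then (if i ≤ m then t i j else r (i - m) j) else 1)
    else 0

lemma triEmbed_le_one (m k : ℕ) (r t : ℕ → ℕ → ℕ)
    (hr : IsGaplessRect k m r) (ht : IsGaplessTriShape m t) :
    ∀ i j, triEmbed m k r t i j ≤ 1 := by
  intro i j
  unfold triEmbed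
  split_ifs with h1 h2 h3
  · rcases ht.1 i j h1.1 h1.2.1 h3 with h | h <;> omega
  · rcases hr.1 (i - m) j (by omega) (by omega) h1.1 h2 with h | h <;> omega
  · exact le_refl 1
  · exact Nat.zero_le 1

instance finiteTri (n : ℕ) : Finite {s : ℕ → ℕ → ℕ // IsGaplessTriShape n s} := by
  apply Finite.of_injective
    (fun s : {s : ℕ → ℕ → ℕ // IsGaplessTriShape n s} =>
      (fun i j : Fin (n + 1) => if s.1 i j = 0 then (0 : Fin 2) else 1))
  intro a b hab
  apply Subtype.ext
  funext i j
  by_cases h : 1 ≤ j ∧ j ≤ i ∧ i ≤ n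
  · have hi : i < n + 1 := by omega
    have hj : j < n + 1 := by omega
    have := congrFun (congrFun hab ⟨i, hi⟩) ⟨j, hj⟩
    simp only at this
    rcases a.2.1 i j h.1 h.2.1 h.2.2 with ha | ha <;>
      rcases b.2.1 i j h.1 h.2.1 h.2.2 with hb | hb <;>
      simp [ha, hb] at this ⊢ <;> omega
  · rw [a.2.2.1 i j (by omega), b.2.2.1 i j (by omega)]

lemma sum_Icc_rev (f : ℕ → ℕ) {i k : ℕ} (h : i ≤ k) :
    ∑ u ∈ Finset.Icc 1 i, f (k + 1 - u) = ∑ v ∈ Finset.Icc (k + 1 - i) k, f v := by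
  apply Finset.sum_nbij' (fun u => k + 1 - u) (fun v => k + 1 - v) <;>
    (intro a ha; simp only [Finset.mem_Icc] at *) <;> first | omega | (congr 1; omega)

lemma sum_Ioc_shift (f : ℕ → ℕ) (k i : ℕ) :
    ∑ u ∈ Finset.Ioc k i, f u = ∑ w ∈ Finset.Icc 1 (i - k), f (w + k) := by
  apply Finset.sum_nbij' (fun u => u - k) (fun w => w + k) <;>
    (intro a ha; simp only [Finset.mem_Icc, Finset.mem_Ioc] at *) <;>
    first | omega | (congr 1; omega)

lemma triEmbed_shape (m k : ℕ) (hm : 1 ≤ m) (hk : 1 ≤ k) (r t : ℕ → ℕ → ℕ)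
    (hr : IsGaplessRect k m r) (ht : IsGaplessTriShape m t) :
    IsGaplessTriShape (m + k) (triEmbed m k r t) := by
  refine ⟨?_, ?_, ?_⟩
  · intro i j h1 h2 h3
    unfold triEmbed
    split_ifs with h4 h5 h6
    · exact ht.1 i j h1 h2 h6
    · exact hr.1 (i - m) j (by omega) (by omega) h1 h5
    · right; rfl
    · left; rfl
  · intro i j h
    unfold triEmbed
    rw [if_neg (by omega)]
  · intro j hj1 hj2 i hi1 hi2
    by_cases hjk : j ≤ k
    · -- both columns in the all-ones region; RHS terms are all 1
      have hR : ∀ u ∈ Finset.Icc 1 i, triEmbed m k r t (m + k + 1 - u) (m + k + 1 - j) = 1 := by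
        intro u hu
        simp only [Finset.mem_Icc] at hu
        unfold triEmbed
        rw [if_pos (by omega), if_neg (by omega)]
      calc ∑ u ∈ Finset.Icc 1 i, triEmbed m k r t (m + k + 1 - u) (m + k - j)
          ≤ ∑ u ∈ Finset.Icc 1 i, 1 :=
            Finset.sum_le_sum (fun u _ => triEmbed_le_one m k r t hr ht _ _)
        _ = ∑ u ∈ Finset.Icc 1 i, triEmbed m k r t (m + k + 1 - u) (m + k + 1 - j) :=
            (Finset.sum_congr rfl hR).symm
    · -- j ≥ k + 1
      push_neg at hjk
      have hi0 : 1 ≤ j - k ∧ j - k ≤ m - 1 := by omega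
      -- columns: cL = m - (j - k), cR = m + 1 - (j - k)
      have hcL : m + k - j = m - (j - k) := by omega
      have hcR : m + k + 1 - j = m + 1 - (j - k) := by omega
      rw [hcL, hcR]
      by_cases hik : i ≤ k
      · -- purely rectangle region
        have hterm : ∀ c, 1 ≤ c → c ≤ m → ∀ u ∈ Finset.Icc 1 i,
            triEmbed m k r t (m + k + 1 - u) c = r (k + 1 - u) c := by
          intro c hc1 hc2 u hu
          simp only [Finset.mem_Icc] at hu
          unfold triEmbed
          rw [if_pos (by omega), if_pos hc2, if_neg (by omega)]
          congr 1
          omega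
        have e1 : ∀ c, ∑ x ∈ Finset.Icc 1 i, r (k + 1 - x) c
            = ∑ v ∈ Finset.Icc (k + 1 - i) k, r v c :=
          fun c => sum_Icc_rev (fun v => r v c) hik
        rw [Finset.sum_congr rfl (hterm _ (by omega) (by omega)),
            Finset.sum_congr rfl (hterm _ (by omega) (by omega)), e1, e1]
        have := hr.2.2 (m - (j - k)) (by omega) (by omega) (k + 1 - i) (by omega) (by omega)
        have hcc : m - (j - k) + 1 = m + 1 - (j - k) := by omega
        rwa [hcc] at this
      · -- i ≥ k + 1 : split at k
        push_neg at hik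
        have hsplit : ∀ c, ∑ u ∈ Finset.Icc 1 i, triEmbed m k r t (m + k + 1 - u) c
            = ∑ u ∈ Finset.Ioc 0 k, triEmbed m k r t (m + k + 1 - u) c
              + ∑ u ∈ Finset.Ioc k i, triEmbed m k r t (m + k + 1 - u) c := by
          intro c
          have hIoc : Finset.Icc 1 i = Finset.Ioc 0 i := by
            ext a; simp only [Finset.mem_Icc, Finset.mem_Ioc]; omega
          rw [hIoc, ← Finset.sum_Ioc_consecutive _ (Nat.zero_le k) (le_of_lt hik)]
        rw [hsplit, hsplit]
        have hIcc : (Finset.Ioc 0 k) = Finset.Icc 1 k := (Finset.Icc_add_one_left_eq_Ioc 0 k).symm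
        -- rectangle part
        have hrect : ∀ c, 1 ≤ c → c ≤ m →
            ∑ u ∈ Finset.Ioc 0 k, triEmbed m k r t (m + k + 1 - u) c
              = ∑ v ∈ Finset.Icc 1 k, r v c := by
          intro c hc1 hc2
          rw [hIcc]
          have hterm : ∀ u ∈ Finset.Icc 1 k,
              triEmbed m k r t (m + k + 1 - u) c = r (k + 1 - u) c := by
            intro u hu
            simp only [Finset.mem_Icc] at hu
            unfold triEmbed
            rw [if_pos (by omega), if_pos hc2, if_neg (by omega)]
            congr 1
            omega
          have e1 : ∑ x ∈ Finset.Icc 1 k, r (k + 1 - x) c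
              = ∑ v ∈ Finset.Icc (k + 1 - k) k, r v c :=
            sum_Icc_rev (fun v => r v c) (le_refl k)
          rw [show k + 1 - k = 1 from by omega] at e1
          rw [Finset.sum_congr rfl hterm, e1]
        -- triangle part
        have htri : ∀ c, 1 ≤ c → c + (j - k) ≤ m + 1 →
            ∑ u ∈ Finset.Ioc k i, triEmbed m k r t (m + k + 1 - u) c
              = ∑ w ∈ Finset.Icc 1 (i - k), t (m + 1 - w) c := by
          intro c hc1 hc2
          rw [sum_Ioc_shift]
          apply Finset.sum_congr rfl
          intro w hw
          simp only [Finset.mem_Icc] at hw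
          unfold triEmbed
          rw [if_pos (by omega), if_pos (by omega), if_pos (by omega)]
          congr 1
          omega
        rw [hrect _ (by omega) (by omega), hrect _ (by omega) (by omega),
            htri _ (by omega) (by omega), htri _ (by omega) (by omega)]
        have h1 : ∑ v ∈ Finset.Icc 1 k, r v (m - (j - k))
            ≤ ∑ v ∈ Finset.Icc 1 k, r v (m + 1 - (j - k)) := by
          have := hr.2.2 (m - (j - k)) (by omega) (by omega) 1 (le_refl 1) hk
          have hcc : m - (j - k) + 1 = m + 1 - (j - k) := by omega
          rwa [hcc] at this
        have h2 : ∑ w ∈ Finset.Icc 1 (i - k), t (m + 1 - w) (m - (j - k))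
            ≤ ∑ w ∈ Finset.Icc 1 (i - k), t (m + 1 - w) (m + 1 - (j - k)) :=
          ht.2.2 (j - k) (by omega) (by omega) (i - k) (by omega) (by omega)
        omega

lemma triEmbed_inj (m k : ℕ) (r t r' t' : ℕ → ℕ → ℕ)
    (hr : IsGaplessRect k m r) (ht : IsGaplessTriShape m t)
    (hr' : IsGaplessRect k m r') (ht' : IsGaplessTriShape m t')
    (h : triEmbed m k r t = triEmbed m k r' t') : r = r' ∧ t = t' := by
  constructor
  · funext a j
    by_cases hs : 1 ≤ a ∧ a ≤ k ∧ 1 ≤ j ∧ j ≤ m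
    · have e : ∀ x : ℕ → ℕ → ℕ, triEmbed m k x t (a + m) j = x a j := by
        intro x
        unfold triEmbed
        rw [if_pos (by omega), if_pos (by omega), if_neg (by omega),
          Nat.add_sub_cancel]
      have e' : ∀ x : ℕ → ℕ → ℕ, triEmbed m k x t' (a + m) j = x a j := by
        intro x
        unfold triEmbed
        rw [if_pos (by omega), if_pos (by omega), if_neg (by omega),
          Nat.add_sub_cancel]
      rw [← e r, ← e' r', ← congrFun (congrFun h (a + m)) j, e r]
    · rw [hr.2.1 a j (by omega), hr'.2.1 a j (by omega)]
  · funext i j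
    by_cases hs : 1 ≤ j ∧ j ≤ i ∧ i ≤ m
    · have e : ∀ x : ℕ → ℕ → ℕ, triEmbed m k r x i j = x i j := by
        intro x
        unfold triEmbed
        rw [if_pos (by omega), if_pos (by omega), if_pos (by omega)]
      have e' : ∀ x : ℕ → ℕ → ℕ, triEmbed m k r' x i j = x i j := by
        intro x
        unfold triEmbed
        rw [if_pos (by omega), if_pos (by omega), if_pos (by omega)]
      rw [← e t, ← e' t', ← congrFun (congrFun h i) j, e t]
    · rw [ht.2.1 i j (by omega), ht'.2.1 i j (by omega)]


/-- If `a n` denotes the number of gapless triangular shapes of size `n` and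
`ρ_{m,p}` the number of gapless rectangular shapes with `p` rows and `m` columns,
then for `1 ≤ k < n`, `a n ≥ ρ_{n-k,k} · a_{n-k}`. -/
theorem card_gapless_tri_ge (n k : ℕ) (hk : 1 ≤ k) (hkn : k < n) :
    Nat.card {r : ℕ → ℕ → ℕ // IsGaplessRect k (n - k) r} *
        Nat.card {s : ℕ → ℕ → ℕ // IsGaplessTriShape (n - k) s} ≤
      Nat.card {s : ℕ → ℕ → ℕ // IsGaplessTriShape n s} := by
  obtain ⟨m, rfl⟩ : ∃ m, n = m + k := ⟨n - k, by omega⟩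
  have hm : 1 ≤ m := by omega
  rw [Nat.add_sub_cancel, ← Nat.card_prod]
  exact Nat.card_le_card_of_injective
    (fun p : {r : ℕ → ℕ → ℕ // IsGaplessRect k m r} ×
        {s : ℕ → ℕ → ℕ // IsGaplessTriShape m s} =>
      (⟨triEmbed m k p.1.1 p.2.1,
        triEmbed_shape m k hm hk p.1.1 p.2.1 p.1.2 p.2.2⟩ :
        {s : ℕ → ℕ → ℕ // IsGaplessTriShape (m + k) s}))
    (by
      rintro ⟨⟨r, hr⟩, ⟨t, ht⟩⟩ ⟨⟨r', hr'⟩, ⟨t', ht'⟩⟩ hEq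
      simp only [Subtype.mk.injEq] at hEq
      obtain ⟨h1, h2⟩ := triEmbed_inj m k r t r' t' hr ht hr' ht' hEq
      simp [Prod.ext_iff, Subtype.ext_iff, h1, h2])
end

section
/- Define the sequence (α_n) by α_1 = 1, α_2 = 2, α_3 = 6, α_4 = 26, and for n ≥ 5, α_n = ρ_{⌈n/2⌉, ⌊n/2⌋} · α_{⌈n/2⌉}, where ρ_{m,p} is the number of gapless rectangular shapes with p rows and m columns. Then the number of gapless triangular shapes of size n is at least α_n. -/
/-- `rho m p` is the number of gapless rectangular shapes with `p` rows and `m` columns. -/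
noncomputable def rho (m p : ℕ) : ℕ := Nat.card {r : ℕ → ℕ → ℕ // IsGaplessRect p m r}

/-- The sequence `α`: `α 1 = 1`, `α 2 = 2`, `α 3 = 6`, `α 4 = 26`, and for `n ≥ 5`,
`α n = ρ_{⌈n/2⌉, ⌊n/2⌋} · α_{⌈n/2⌉}`. -/
noncomputable def alphaSeq : ℕ → ℕ
  | 0 => 0
  | 1 => 1
  | 2 => 2
  | 3 => 6
  | 4 => 26
  | (n + 5) => rho ((n + 5 + 1) / 2) ((n + 5) / 2) * alphaSeq ((n + 5 + 1) / 2)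
  decreasing_by omega


open Finset

lemma tri_le_one {n : ℕ} {s : ℕ → ℕ → ℕ} (h : IsGaplessTriShape n s) (i j : ℕ) : s i j ≤ 1 := by
  by_cases hc : 1 ≤ j ∧ j ≤ i ∧ i ≤ n
  · rcases h.1 i j hc.1 hc.2.1 hc.2.2 with h0 | h0 <;> omega
  · rw [h.2.1 i j (by omega)]; omega

lemma rect_le_one {p m : ℕ} {r : ℕ → ℕ → ℕ} (h : IsGaplessRect p m r) (i j : ℕ) : r i j ≤ 1 := by
  by_cases hc : 1 ≤ i ∧ i ≤ p ∧ 1 ≤ j ∧ j ≤ m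
  · rcases h.1 i j hc.1 hc.2.1 hc.2.2.1 hc.2.2.2 with h0 | h0 <;> omega
  · rw [h.2.1 i j (by omega)]; omega

lemma tri_finite (n : ℕ) : Finite {s : ℕ → ℕ → ℕ // IsGaplessTriShape n s} := by
  apply Finite.of_injective (β := Fin (n+1) → Fin (n+1) → Fin 2)
    (fun s i j => ⟨s.1 i j, by have := tri_le_one s.2 i j; omega⟩)
  intro s t h
  apply Subtype.ext; funext i j
  by_cases hc : i ≤ n ∧ j ≤ n
  · have := congrFun (congrFun h ⟨i, by omega⟩) ⟨j, by omega⟩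
    simpa [Fin.mk.injEq] using this
  · rw [s.2.2.1 i j (by omega), t.2.2.1 i j (by omega)]

lemma rect_finite (p m : ℕ) : Finite {r : ℕ → ℕ → ℕ // IsGaplessRect p m r} := by
  apply Finite.of_injective (β := Fin (p+1) → Fin (m+1) → Fin 2)
    (fun s i j => ⟨s.1 i j, by have := rect_le_one s.2 i j; omega⟩)
  intro s t h
  apply Subtype.ext; funext i j
  by_cases hc : i ≤ p ∧ j ≤ m
  · have := congrFun (congrFun h ⟨i, by omega⟩) ⟨j, by omega⟩
    simpa [Fin.mk.injEq] using this
  · rw [s.2.2.1 i j (by omega), t.2.2.1 i j (by omega)]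

lemma sum_Icc_reflect (f : ℕ → ℕ) (i p : ℕ) (h : i ≤ p) :
    ∑ k ∈ Finset.Icc 1 i, f (p + 1 - k) = ∑ k ∈ Finset.Icc (p + 1 - i) p, f k := by
  apply Finset.sum_nbij' (fun k => p + 1 - k) (fun k => p + 1 - k) <;>
    intros a ha <;> simp only [Finset.mem_Icc] at * <;> omega

lemma sum_Icc_shift (f : ℕ → ℕ) (p i : ℕ) :
    ∑ k ∈ Finset.Icc (p + 1) i, f k = ∑ k ∈ Finset.Icc 1 (i - p), f (k + p) := by
  refine Finset.sum_nbij' (fun k => k - p) (fun k => k + p) ?_ ?_ ?_ ?_ ?_ <;>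
    intro a ha <;> simp only [Finset.mem_Icc] at ha ⊢
  · omega
  · omega
  · omega
  · omega
  · congr 1; omega

def combine (n m : ℕ) (t r : ℕ → ℕ → ℕ) (i j : ℕ) : ℕ :=
  if 1 ≤ j ∧ j ≤ i ∧ i ≤ n then
    (if m < j then 1 else if m < i then r (i - m) j else t i j)
  else 0

section Step
variable {m p n : ℕ} {t r : ℕ → ℕ → ℕ}

lemma combine_t (hmn : m ≤ n) {i j : ℕ} (h1 : 1 ≤ j) (h2 : j ≤ i) (h3 : i ≤ m) :
    combine n m t r i j = t i j := by
  unfold combine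
  rw [if_pos ⟨h1, h2, le_trans h3 hmn⟩, if_neg (by omega), if_neg (by omega)]

lemma combine_r (hmp : m + p = n) {a j : ℕ} (h1 : 1 ≤ j) (h2 : j ≤ m) (h3 : 1 ≤ a) (h4 : a ≤ p) :
    combine n m t r (m + a) j = r a j := by
  unfold combine
  rw [if_pos ⟨h1, by omega, by omega⟩, if_neg (by omega), if_pos (by omega)]
  congr 1; omega

lemma combine_one {i j : ℕ} (h1 : m < j) (h2 : j ≤ i) (h3 : i ≤ n) :
    combine n m t r i j = 1 := by
  unfold combine
  rw [if_pos ⟨by omega, h2, h3⟩, if_pos h1]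

lemma combine_le_one (ht : IsGaplessTriShape m t) (hr : IsGaplessRect p m r) (i j : ℕ) :
    combine n m t r i j ≤ 1 := by
  unfold combine
  split_ifs with h1 h2 h3
  · omega
  · exact rect_le_one hr _ _
  · exact tri_le_one ht _ _
  · omega

lemma combine_shape (hm : 1 ≤ m) (hp : 1 ≤ p) (hmp : m + p = n)
    (ht : IsGaplessTriShape m t) (hr : IsGaplessRect p m r) :
    IsGaplessTriShape n (combine n m t r) := by
  refine ⟨?_, ?_, ?_⟩
  · intro i j hj hji hin
    unfold combine
    rw [if_pos ⟨hj, hji, hin⟩]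
    split_ifs with h1 h2
    · right; rfl
    · exact hr.1 (i - m) j (by omega) (by omega) hj (by omega)
    · exact ht.1 i j hj hji (by omega)
  · intro i j h
    unfold combine
    rw [if_neg (by omega)]
  · intro j hj1 hj2 i hi1 hi2
    have hc1 : n + 1 - j = (n - j) + 1 := by omega
    rw [hc1]
    set c := n - j with hc
    have hcge : 1 ≤ c := by omega
    have hile : i ≤ n - c := by omega
    have hcn : c ≤ n - 1 := by omega
    rcases lt_trichotomy c m with hcm | hcm | hcm
    · -- c < m
      by_cases hip : i ≤ p
      · have e1 : ∀ k ∈ Finset.Icc 1 i, combine n m t r (n + 1 - k) c = r (p + 1 - k) c := by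
          intro k hk; simp only [Finset.mem_Icc] at hk
          have hnk : n + 1 - k = m + (p + 1 - k) := by omega
          rw [hnk, combine_r hmp hcge (by omega) (by omega) (by omega)]
        have e2 : ∀ k ∈ Finset.Icc 1 i, combine n m t r (n + 1 - k) (c + 1) = r (p + 1 - k) (c + 1) := by
          intro k hk; simp only [Finset.mem_Icc] at hk
          have hnk : n + 1 - k = m + (p + 1 - k) := by omega
          rw [hnk, combine_r hmp (by omega) (by omega) (by omega) (by omega)]
        rw [Finset.sum_congr rfl e1, Finset.sum_congr rfl e2,
          sum_Icc_reflect (fun k => r k c) i p hip,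
          sum_Icc_reflect (fun k => r k (c + 1)) i p hip]
        exact hr.2.2 c hcge hcm (p + 1 - i) (by omega) (by omega)
      · -- p < i
        have hsplit : ∀ g : ℕ → ℕ, ∑ k ∈ Finset.Icc 1 i, g k =
            (∑ k ∈ Finset.Icc 1 p, g k) + ∑ k ∈ Finset.Icc (p + 1) i, g k := by
          intro g
          have hu : Finset.Icc 1 i = Finset.Icc 1 p ∪ Finset.Icc (p + 1) i := by
            ext x; simp only [Finset.mem_Icc, Finset.mem_union]; omega
          rw [hu, Finset.sum_union]
          rw [Finset.disjoint_left]
          intro x hx hx'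
          simp only [Finset.mem_Icc] at hx hx'
          omega
        rw [hsplit (fun k => combine n m t r (n + 1 - k) c),
          hsplit (fun k => combine n m t r (n + 1 - k) (c + 1))]
        apply Nat.add_le_add
        · -- rectangle part
          have e1 : ∀ k ∈ Finset.Icc 1 p, combine n m t r (n + 1 - k) c = r (p + 1 - k) c := by
            intro k hk; simp only [Finset.mem_Icc] at hk
            have hnk : n + 1 - k = m + (p + 1 - k) := by omega
            rw [hnk, combine_r hmp hcge (by omega) (by omega) (by omega)]
          have e2 : ∀ k ∈ Finset.Icc 1 p, combine n m t r (n + 1 - k) (c + 1) = r (p + 1 - k) (c + 1) := by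
            intro k hk; simp only [Finset.mem_Icc] at hk
            have hnk : n + 1 - k = m + (p + 1 - k) := by omega
            rw [hnk, combine_r hmp (by omega) (by omega) (by omega) (by omega)]
          rw [Finset.sum_congr rfl e1, Finset.sum_congr rfl e2,
            sum_Icc_reflect (fun k => r k c) p p le_rfl,
            sum_Icc_reflect (fun k => r k (c + 1)) p p le_rfl]
          exact hr.2.2 c hcge hcm (p + 1 - p) (by omega) (by omega)
        · -- triangle part
          have e1 : ∀ k ∈ Finset.Icc (p + 1) i, combine n m t r (n + 1 - k) c = t (n + 1 - k) c := by
            intro k hk; simp only [Finset.mem_Icc] at hk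
            exact combine_t (by omega) hcge (by omega) (by omega)
          have e2 : ∀ k ∈ Finset.Icc (p + 1) i,
              combine n m t r (n + 1 - k) (c + 1) = t (n + 1 - k) (c + 1) := by
            intro k hk; simp only [Finset.mem_Icc] at hk
            exact combine_t (by omega) (by omega) (by omega) (by omega)
          rw [Finset.sum_congr rfl e1, Finset.sum_congr rfl e2,
            sum_Icc_shift (fun k => t (n + 1 - k) c) p i,
            sum_Icc_shift (fun k => t (n + 1 - k) (c + 1)) p i]
          have e3 : ∀ k ∈ Finset.Icc 1 (i - p), t (n + 1 - (k + p)) c = t (m + 1 - k) (m - (m - c)) := by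
            intro k hk; simp only [Finset.mem_Icc] at hk
            congr 1 <;> omega
          have e4 : ∀ k ∈ Finset.Icc 1 (i - p),
              t (n + 1 - (k + p)) (c + 1) = t (m + 1 - k) (m + 1 - (m - c)) := by
            intro k hk; simp only [Finset.mem_Icc] at hk
            congr 1 <;> omega
          rw [Finset.sum_congr rfl e3, Finset.sum_congr rfl e4]
          exact ht.2.2 (m - c) (by omega) (by omega) (i - p) (by omega) (by omega)
    · -- c = m
      have e2 : ∀ k ∈ Finset.Icc 1 i, combine n m t r (n + 1 - k) (c + 1) = 1 := by
        intro k hk; simp only [Finset.mem_Icc] at hk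
        exact combine_one (by omega) (by omega) (by omega)
      rw [Finset.sum_congr rfl e2]
      calc ∑ k ∈ Finset.Icc 1 i, combine n m t r (n + 1 - k) c
          ≤ ∑ _k ∈ Finset.Icc 1 i, 1 := Finset.sum_le_sum (fun k _ => combine_le_one ht hr _ _)
        _ = _ := rfl
    · -- m < c
      have e1 : ∀ k ∈ Finset.Icc 1 i, combine n m t r (n + 1 - k) c = 1 := by
        intro k hk; simp only [Finset.mem_Icc] at hk
        exact combine_one (by omega) (by omega) (by omega)
      have e2 : ∀ k ∈ Finset.Icc 1 i, combine n m t r (n + 1 - k) (c + 1) = 1 := by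
        intro k hk; simp only [Finset.mem_Icc] at hk
        exact combine_one (by omega) (by omega) (by omega)
      rw [Finset.sum_congr rfl e1, Finset.sum_congr rfl e2]

lemma step_lemma (hm : 1 ≤ m) (hp : 1 ≤ p) (hmp : m + p = n) :
    rho m p * Nat.card {s : ℕ → ℕ → ℕ // IsGaplessTriShape m s} ≤
      Nat.card {s : ℕ → ℕ → ℕ // IsGaplessTriShape n s} := by
  haveI := tri_finite n
  rw [rho, ← Nat.card_prod]
  apply Nat.card_le_card_of_injective
    (fun x : {r : ℕ → ℕ → ℕ // IsGaplessRect p m r} × {s : ℕ → ℕ → ℕ // IsGaplessTriShape m s} =>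
      (⟨combine n m x.2.1 x.1.1, combine_shape hm hp hmp x.2.2 x.1.2⟩ :
        {s : ℕ → ℕ → ℕ // IsGaplessTriShape n s}))
  rintro ⟨⟨r1, hr1⟩, ⟨t1, ht1⟩⟩ ⟨⟨r2, hr2⟩, ⟨t2, ht2⟩⟩ h
  simp only [Subtype.mk.injEq, Prod.mk.injEq] at h ⊢
  have heq : combine n m t1 r1 = combine n m t2 r2 := h
  constructor
  · funext a j
    by_cases hc : 1 ≤ a ∧ a ≤ p ∧ 1 ≤ j ∧ j ≤ m
    · have h1 := combine_r (t := t1) (r := r1) hmp hc.2.2.1 hc.2.2.2 hc.1 hc.2.1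
      have h2 := combine_r (t := t2) (r := r2) hmp hc.2.2.1 hc.2.2.2 hc.1 hc.2.1
      rw [← h1, ← h2, heq]
    · rw [hr1.2.1 a j (by omega), hr2.2.1 a j (by omega)]
  · funext i j
    by_cases hc : 1 ≤ j ∧ j ≤ i ∧ i ≤ m
    · have h1 := combine_t (t := t1) (r := r1) (n := n) (by omega) hc.1 hc.2.1 hc.2.2
      have h2 := combine_t (t := t2) (r := r2) (n := n) (by omega) hc.1 hc.2.1 hc.2.2
      rw [← h1, ← h2, heq]
    · rw [ht1.2.1 i j (by omega), ht2.2.1 i j (by omega)]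

end Step

/-! Base cases -/

lemma zero_tri (n : ℕ) : IsGaplessTriShape n (fun _ _ => 0) :=
  ⟨fun _ _ _ _ _ => Or.inl rfl, fun _ _ _ => rfl, fun _ _ _ _ _ _ => le_rfl⟩

def triOf (v : Fin 2 × Fin 2 × Fin 2) : ℕ → ℕ → ℕ := fun i j =>
  if i = 1 ∧ j = 1 then v.1 else
  if i = 2 ∧ j = 1 then v.2.1 else
  if i = 2 ∧ j = 2 then v.2.2 else 0

lemma triOf_shape (v : Fin 2 × Fin 2 × Fin 2) (hv : (v.2.1 : ℕ) ≤ (v.2.2 : ℕ)) :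
    IsGaplessTriShape 2 (triOf v) := by
  refine ⟨?_, ?_, ?_⟩
  · intro i j _ _ _
    unfold triOf
    have h1 := v.1.isLt; have h2 := v.2.1.isLt; have h3 := v.2.2.isLt
    split_ifs <;> omega
  · intro i j h
    unfold triOf
    split_ifs <;> omega
  · intro j hj1 hj2 i hi1 hi2
    have hj : j = 1 := by omega
    have hi : i = 1 := by omega
    subst hj; subst hi
    simp only [Finset.Icc_self, Finset.sum_singleton]
    norm_num [triOf]
    exact hv

lemma tri2_card : 6 ≤ Nat.card {s : ℕ → ℕ → ℕ // IsGaplessTriShape 2 s} := by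
  haveI := tri_finite 2
  have h6 : Nat.card {v : Fin 2 × Fin 2 × Fin 2 // (v.2.1 : ℕ) ≤ (v.2.2 : ℕ)} = 6 := by
    rw [Nat.card_eq_fintype_card]; decide
  rw [← h6]
  apply Nat.card_le_card_of_injective
    (fun v => (⟨triOf v.1, triOf_shape v.1 v.2⟩ : {s : ℕ → ℕ → ℕ // IsGaplessTriShape 2 s}))
  rintro ⟨⟨a1, b1, c1⟩, h1⟩ ⟨⟨a2, b2, c2⟩, h2⟩ h
  simp only [Subtype.mk.injEq] at h
  have e1 := congrFun (congrFun h 1) 1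
  have e2 := congrFun (congrFun h 2) 1
  have e3 := congrFun (congrFun h 2) 2
  simp only [triOf] at e1 e2 e3
  norm_num at e1 e2 e3
  apply Subtype.ext
  simp only [Prod.mk.injEq]
  exact ⟨Fin.val_injective e1, Fin.val_injective e2, Fin.val_injective e3⟩

def rectOf (v : Fin 2 × Fin 2 × Fin 2 × Fin 2) : ℕ → ℕ → ℕ := fun i j =>
  if i = 1 ∧ j = 1 then v.1 else
  if i = 1 ∧ j = 2 then v.2.1 else
  if i = 2 ∧ j = 1 then v.2.2.1 else
  if i = 2 ∧ j = 2 then v.2.2.2 else 0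

def RectP (v : Fin 2 × Fin 2 × Fin 2 × Fin 2) : Prop :=
  (v.2.2.1 : ℕ) ≤ (v.2.2.2 : ℕ) ∧ (v.1 : ℕ) + (v.2.2.1 : ℕ) ≤ (v.2.1 : ℕ) + (v.2.2.2 : ℕ)

instance : DecidablePred RectP := fun v => by unfold RectP; infer_instance

lemma rectOf_shape (v : Fin 2 × Fin 2 × Fin 2 × Fin 2) (hv : RectP v) :
    IsGaplessRect 2 2 (rectOf v) := by
  obtain ⟨hv1, hv2⟩ := hv
  refine ⟨?_, ?_, ?_⟩
  · intro i j _ _ _ _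
    unfold rectOf
    have h1 := v.1.isLt; have h2 := v.2.1.isLt; have h3 := v.2.2.1.isLt; have h4 := v.2.2.2.isLt
    split_ifs <;> omega
  · intro i j h
    unfold rectOf
    split_ifs <;> omega
  · intro j hj1 hj2 i hi1 hi2
    have hj : j = 1 := by omega
    subst hj
    have hicc : Finset.Icc 2 2 = {2} := Finset.Icc_self 2
    have hicc2 : Finset.Icc 1 2 = {1, 2} := by decide
    interval_cases i
    · rw [hicc2, Finset.sum_pair (by omega), Finset.sum_pair (by omega)]
      norm_num [rectOf]
      omega
    · rw [hicc, Finset.sum_singleton, Finset.sum_singleton]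
      norm_num [rectOf]
      exact hv1

lemma rho22 : 10 ≤ rho 2 2 := by
  haveI := rect_finite 2 2
  have h10 : Nat.card {v : Fin 2 × Fin 2 × Fin 2 × Fin 2 // RectP v} = 10 := by
    rw [Nat.card_eq_fintype_card]; decide
  rw [rho, ← h10]
  apply Nat.card_le_card_of_injective
    (fun v => (⟨rectOf v.1, rectOf_shape v.1 v.2⟩ : {r : ℕ → ℕ → ℕ // IsGaplessRect 2 2 r}))
  rintro ⟨⟨a1, b1, c1, d1⟩, h1⟩ ⟨⟨a2, b2, c2, d2⟩, h2⟩ h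
  simp only [Subtype.mk.injEq] at h
  have e1 := congrFun (congrFun h 1) 1
  have e2 := congrFun (congrFun h 1) 2
  have e3 := congrFun (congrFun h 2) 1
  have e4 := congrFun (congrFun h 2) 2
  simp only [rectOf] at e1 e2 e3 e4
  norm_num at e1 e2 e3 e4
  apply Subtype.ext
  simp only [Prod.mk.injEq]
  exact ⟨Fin.val_injective e1, Fin.val_injective e2, Fin.val_injective e3, Fin.val_injective e4⟩

def rectOf1 (v : Fin 2 × Fin 2) : ℕ → ℕ → ℕ := fun i j =>
  if i = 1 ∧ j = 1 then v.1 else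
  if i = 1 ∧ j = 2 then v.2 else 0

lemma rectOf1_shape (v : Fin 2 × Fin 2) (hv : (v.1 : ℕ) ≤ (v.2 : ℕ)) :
    IsGaplessRect 1 2 (rectOf1 v) := by
  refine ⟨?_, ?_, ?_⟩
  · intro i j _ _ _ _
    unfold rectOf1
    have h1 := v.1.isLt; have h2 := v.2.isLt
    split_ifs <;> omega
  · intro i j h
    unfold rectOf1
    split_ifs <;> omega
  · intro j hj1 hj2 i hi1 hi2
    have hj : j = 1 := by omega
    have hi : i = 1 := by omega
    subst hj; subst hi
    simp only [Finset.Icc_self, Finset.sum_singleton]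
    norm_num [rectOf1]
    exact hv

lemma rho21 : 3 ≤ rho 2 1 := by
  haveI := rect_finite 1 2
  have h3 : Nat.card {v : Fin 2 × Fin 2 // (v.1 : ℕ) ≤ (v.2 : ℕ)} = 3 := by
    rw [Nat.card_eq_fintype_card]; decide
  rw [rho, ← h3]
  apply Nat.card_le_card_of_injective
    (fun v => (⟨rectOf1 v.1, rectOf1_shape v.1 v.2⟩ : {r : ℕ → ℕ → ℕ // IsGaplessRect 1 2 r}))
  rintro ⟨⟨a1, b1⟩, h1⟩ ⟨⟨a2, b2⟩, h2⟩ h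
  simp only [Subtype.mk.injEq] at h
  have e1 := congrFun (congrFun h 1) 1
  have e2 := congrFun (congrFun h 1) 2
  simp only [rectOf1] at e1 e2
  norm_num at e1 e2
  apply Subtype.ext
  simp only [Prod.mk.injEq]
  exact ⟨Fin.val_injective e1, Fin.val_injective e2⟩

lemma tri_card_pos (n : ℕ) : 1 ≤ Nat.card {s : ℕ → ℕ → ℕ // IsGaplessTriShape n s} := by
  haveI := tri_finite n
  haveI : Nonempty {s : ℕ → ℕ → ℕ // IsGaplessTriShape n s} := ⟨⟨_, zero_tri n⟩⟩
  exact Nat.card_pos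

/-- The number of gapless triangular shapes of size `n` is at least `α n`. -/
theorem card_gapless_tri_ge_alpha (n : ℕ) (hn : 1 ≤ n) :
    alphaSeq n ≤ Nat.card {s : ℕ → ℕ → ℕ // IsGaplessTriShape n s} := by
  revert hn
  induction n using Nat.strong_induction_on with
  | _ n ih =>
  intro hn
  rcases n with _ | (_ | (_ | (_ | (_ | k))))
  · omega
  · simpa [alphaSeq] using tri_card_pos 1
  · calc alphaSeq 2 ≤ 6 := by simp [alphaSeq]
      _ ≤ _ := tri2_card
  · have hstep := step_lemma (m := 2) (p := 1) (n := 3) (by norm_num) (by norm_num) (by norm_num)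
    calc alphaSeq 3 = 6 := by simp [alphaSeq]
      _ ≤ 3 * 6 := by norm_num
      _ ≤ rho 2 1 * Nat.card {s : ℕ → ℕ → ℕ // IsGaplessTriShape 2 s} :=
          Nat.mul_le_mul rho21 tri2_card
      _ ≤ _ := hstep
  · have hstep := step_lemma (m := 2) (p := 2) (n := 4) (by norm_num) (by norm_num) (by norm_num)
    calc alphaSeq 4 = 26 := by simp [alphaSeq]
      _ ≤ 10 * 6 := by norm_num
      _ ≤ rho 2 2 * Nat.card {s : ℕ → ℕ → ℕ // IsGaplessTriShape 2 s} :=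
          Nat.mul_le_mul rho22 tri2_card
      _ ≤ _ := hstep
  · -- n = k + 5
    have heq : k + 1 + 1 + 1 + 1 + 1 = k + 5 := rfl
    rw [heq]
    have hrec : alphaSeq (k + 5) = rho ((k + 5 + 1) / 2) ((k + 5) / 2) * alphaSeq ((k + 5 + 1) / 2) := by
      rw [alphaSeq]
    have hih := ih ((k + 5 + 1) / 2) (by omega) (by omega)
    have hstep := step_lemma (m := (k + 5 + 1) / 2) (p := (k + 5) / 2) (n := k + 5)
      (by omega) (by omega) (by omega)
    calc alphaSeq (k + 5)
        = rho ((k + 5 + 1) / 2) ((k + 5) / 2) * alphaSeq ((k + 5 + 1) / 2) := hrec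
      _ ≤ rho ((k + 5 + 1) / 2) ((k + 5) / 2) *
            Nat.card {s : ℕ → ℕ → ℕ // IsGaplessTriShape ((k + 5 + 1) / 2) s} :=
          Nat.mul_le_mul le_rfl hih
      _ ≤ _ := hstep
end

section
/- Let T = (a_{i,j}) be a monotone triangle of size n and let Δ(T) = (b_{i,j}) be the triangular array defined by b_{i,j} = a_{i,j} + i - j. Then Δ(T) is a Magog triangle of size n if and only if T is gapless; moreover, in that case Δ(T) is a gapless Magog triangle. -/
/-- A Magog triangle of size `n`: a triangular array `b i j` (`1 ≤ j ≤ i ≤ n`) of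
positive integers with `i ≤ b i j ≤ n`, weakly increasing down columns
(`b i j ≤ b (i+1) j`) and along rows (`b i j ≤ b i (j+1)`). -/
def IsMagogTriangle (n : ℕ) (b : ℕ → ℕ → ℕ) : Prop :=
  (∀ i j, 1 ≤ j → j ≤ i → i ≤ n → i ≤ b i j ∧ b i j ≤ n) ∧
  (∀ i j, 1 ≤ j → j ≤ i → i + 1 ≤ n → b i j ≤ b (i + 1) j) ∧
  (∀ i j, 1 ≤ j → j + 1 ≤ i → i ≤ n → b i j ≤ b i (j + 1))

/-- A Magog triangle is gapless if `b (i+1) j - b i j ≤ 1` whenever both are defined. -/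
def MagogGapless (n : ℕ) (b : ℕ → ℕ → ℕ) : Prop :=
  ∀ i j, 1 ≤ j → j ≤ i → i + 1 ≤ n → b (i + 1) j ≤ b i j + 1

/-- For a monotone triangle `T = (a i j)`, the triangle `Δ(T) = (a i j + i - j)` is a
Magog triangle iff `T` is gapless; moreover in that case `Δ(T)` is a gapless Magog
triangle. -/
theorem delta_magog_iff_gapless (n : ℕ) (a : ℕ → ℕ → ℕ)
    (hmt : MonotoneTriangle n a) :
    (IsMagogTriangle n (fun i j => a i j + i - j) ↔ GaplessMT n a) ∧
    (GaplessMT n a →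
      IsMagogTriangle n (fun i j => a i j + i - j) ∧
        MagogGapless n (fun i j => a i j + i - j)) := by
  obtain ⟨hrow, hdown, hdiag, hbot⟩ := hmt
  -- bounds: j ≤ a i j and a i j + i ≤ j + n
  have hbd : ∀ k i j, i + k = n → 1 ≤ j → j ≤ i → j ≤ a i j ∧ a i j + i ≤ j + n := by
    intro k
    induction k with
    | zero =>
      intro i j hik hj hji
      have : i = n := by omega
      subst this
      rw [hbot j hj hji]
      omega
    | succ k ih =>
      intro i j hik hj hji
      have h1 := ih (i + 1) j (by omega) hj (by omega)
      have h2 := ih (i + 1) (j + 1) (by omega) (by omega) (by omega)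
      have h3 := hdown i j hj hji (by omega)
      have h4 := hdiag i j hj hji (by omega)
      omega
  have hbd' : ∀ i j, 1 ≤ j → j ≤ i → i ≤ n → j ≤ a i j ∧ a i j + i ≤ j + n := by
    intro i j hj hji hin
    exact hbd (n - i) i j (by omega) hj hji
  have hmag : GaplessMT n a → IsMagogTriangle n (fun i j => a i j + i - j) := by
    intro hg
    refine ⟨?_, ?_, ?_⟩
    · intro i j hj hji hin
      have := hbd' i j hj hji hin
      simp only []
      omega
    · intro i j hj hji hin
      have h1 := hbd' i j hj hji (by omega)
      have h2 := hbd' (i + 1) j hj (by omega) hin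
      have h3 := hg i j hj hji hin
      simp only []
      omega
    · intro i j hj hji hin
      have h1 := hbd' i j hj (by omega) hin
      have h2 := hbd' i (j + 1) (by omega) hji hin
      have h3 := hrow i j hj hji hin
      simp only []
      omega
  refine ⟨⟨?_, hmag⟩, fun hg => ⟨hmag hg, ?_⟩⟩
  · intro hb i j hj hji hin
    have h1 := hbd' i j hj hji (by omega)
    have h2 := hbd' (i + 1) j hj (by omega) hin
    have h3 := hb.2.1 i j hj hji hin
    simp only [] at h3
    omega
  · intro i j hj hji hin
    have h1 := hbd' i j hj hji (by omega)
    have h2 := hbd' (i + 1) j hj (by omega) hin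
    have h3 := hdown i j hj hji hin
    simp only []
    omega
end

section
/- If a permutation π of {1,...,n} contains the pattern 312 at positions (i,j,k) (i.e., i < j < k and π_i > π_k > π_j) with j - i > 1, then there exists an integer l with i ≤ l < j such that π contains a 312 pattern at positions (l, l+1, k), i.e., π_l > π_k > π_{l+1}. -/
/-- If a permutation `π` of `{1, …, n}` contains the pattern 312 at positions
`(i, j, k)` (i.e. `i < j < k` and `π i > π k > π j`) with `j - i > 1`, then there is
an `l` with `i ≤ l < j` such that `π` contains a 312 pattern at positions
`(l, l+1, k)`, i.e. `π l > π k > π (l+1)`. -/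
theorem pattern312_consecutive (n : ℕ) (π : ℕ → ℕ)
    (hπ : Set.BijOn π (Set.Icc 1 n) (Set.Icc 1 n))
    (i j k : ℕ) (hi : 1 ≤ i) (hij : i < j) (hjk : j < k) (hk : k ≤ n)
    (h1 : π j < π k) (h2 : π k < π i) (hgap : 1 < j - i) :
    ∃ l, i ≤ l ∧ l < j ∧ π (l + 1) < π k ∧ π k < π l := by
  classical
  set P : ℕ → Prop := fun m => i ≤ m ∧ π k < π m with hP
  have hij1 : i ≤ j - 1 := by omega
  set l := Nat.findGreatest P (j - 1) with hl
  have hil : i ≤ l := Nat.le_findGreatest hij1 ⟨le_rfl, h2⟩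
  have hlj : l ≤ j - 1 := Nat.findGreatest_le _
  have hPl : P l := Nat.findGreatest_spec (by omega) ⟨le_rfl, h2⟩
  refine ⟨l, hil, by omega, ?_, hPl.2⟩
  rcases eq_or_lt_of_le (show l + 1 ≤ j by omega) with heq | hlt
  · rw [heq]; exact h1
  · have hnP : ¬ P (l + 1) :=
      Nat.findGreatest_is_greatest (n := j - 1) (by omega) (by omega)
    have hle : π (l + 1) ≤ π k := by
      by_contra h
      exact hnP ⟨by omega, lt_of_not_ge h⟩
    rcases eq_or_lt_of_le hle with he | h
    · exfalso
      have := hπ.injOn (show l + 1 ∈ Set.Icc 1 n by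
          simp only [Set.mem_Icc]; omega)
        (show k ∈ Set.Icc 1 n by simp only [Set.mem_Icc]; omega) he
      omega
    · exact h
end

section
/- Let π be a permutation of {1,...,n} and let 1 ≤ i ≤ n-1. Assume that π does not contain a 312 pattern at any position less than i (i.e., there is no l < i and k > l+1 with π_l > π_k > π_{l+1}). Then π avoids the 312 pattern at position i (there is no k > i+1 with π_i > π_k > π_{i+1}) if and only if the set S_i = {π_j : 1 ≤ j ≤ i+1 and π_j ≥ π_{i+1}} consists of consecutive integers. -/
/-- Let `π` be a permutation of `{1, …, n}` and `1 ≤ i ≤ n - 1`. Assume `π` contains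
no 312 pattern at any position `l < i` (i.e. there are no `l < i` and `k > l + 1`,
`k ≤ n`, with `π l > π k > π (l+1)`). Then `π` avoids the 312 pattern at position `i`
(there is no `k` with `i + 1 < k ≤ n` and `π i > π k > π (i+1)`) iff the set
`S i = {π j : 1 ≤ j ≤ i + 1, π j ≥ π (i+1)}` consists of consecutive integers. -/
theorem avoids312_at_iff_consecutive (n : ℕ) (π : ℕ → ℕ)
    (hπ : Set.BijOn π (Set.Icc 1 n) (Set.Icc 1 n))
    (i : ℕ) (hi1 : 1 ≤ i) (hi : i ≤ n - 1)
    (hno : ∀ l k, 1 ≤ l → l < i → l + 1 < k → k ≤ n →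
      ¬(π (l + 1) < π k ∧ π k < π l)) :
    (∀ k, i + 1 < k → k ≤ n → ¬(π (i + 1) < π k ∧ π k < π i)) ↔
    (∃ mn mx : ℕ,
      {x | ∃ j, 1 ≤ j ∧ j ≤ i + 1 ∧ π j = x ∧ π (i + 1) ≤ x} = Set.Icc mn mx) := by
  classical
  have hin : i + 1 ≤ n := by omega
  have hmem : ∀ j, 1 ≤ j → j ≤ i + 1 → j ∈ Set.Icc 1 n := fun j h1 h2 => ⟨h1, by omega⟩
  have hinj := hπ.2.1
  constructor
  · intro h
    set F : Finset ℕ := (Finset.Icc 1 (i+1)).filter (fun j => π (i+1) ≤ π j) with hF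
    have hi1F : i + 1 ∈ F := by simp [hF]
    obtain ⟨j₀, hj₀F, hj₀⟩ := Finset.exists_mem_eq_sup F ⟨_, hi1F⟩ (fun j => π j)
    rw [hF, Finset.mem_filter, Finset.mem_Icc] at hj₀F
    obtain ⟨⟨hj₀1, hj₀le⟩, hj₀ge⟩ := hj₀F
    have hj₀n : j₀ ∈ Set.Icc 1 n := hmem _ hj₀1 hj₀le
    refine ⟨π (i+1), π j₀, ?_⟩
    ext x
    simp only [Set.mem_setOf_eq, Set.mem_Icc]
    constructor
    · rintro ⟨j, h1j, hji, rfl, hle⟩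
      refine ⟨hle, ?_⟩
      rw [← hj₀]
      exact Finset.le_sup (f := fun j => π j)
        (by rw [hF, Finset.mem_filter, Finset.mem_Icc]; exact ⟨⟨h1j, hji⟩, hle⟩)
    · rintro ⟨hx1, hx2⟩
      have hπi1 : π (i+1) ∈ Set.Icc 1 n := hπ.1 (hmem _ (by omega) le_rfl)
      have hπj₀ : π j₀ ∈ Set.Icc 1 n := hπ.1 hj₀n
      have hxIcc : x ∈ Set.Icc 1 n := ⟨le_trans hπi1.1 hx1, le_trans hx2 hπj₀.2⟩
      obtain ⟨k, hk, rfl⟩ := hπ.2.2 hxIcc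
      by_cases hki : k ≤ i + 1
      · exact ⟨k, hk.1, hki, rfl, hx1⟩
      · exfalso
        push_neg at hki
        -- π (i+1) < π k
        have h1 : π (i+1) < π k := by
          rcases lt_or_eq_of_le hx1 with h | h
          · exact h
          · exact absurd (hinj (hmem _ (by omega) le_rfl) hk h) (by omega)
        -- π k < π j₀
        have h2 : π k < π j₀ := by
          rcases lt_or_eq_of_le hx2 with h | h
          · exact h
          · exact absurd (hinj hk hj₀n h) (by omega)
        have hj₀i : j₀ ≤ i := by
          rcases Nat.lt_or_ge j₀ (i+1) with h | h
          · omega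
          · have : j₀ = i + 1 := by omega
            subst this; omega
        set P : ℕ → Prop := fun l => 1 ≤ l ∧ π k < π l with hP
        set l : ℕ := Nat.findGreatest P i with hl
        have hPl : P l := Nat.findGreatest_spec hj₀i ⟨hj₀1, h2⟩
        have hlle : l ≤ i := Nat.findGreatest_le i
        rcases lt_or_eq_of_le hlle with hlt | heq
        · have hnl : ¬ P (l + 1) := by
            exact Nat.findGreatest_is_greatest (n := i) (by omega) (by omega)
          have hle : π (l+1) ≤ π k := by
            by_contra hc
            exact hnl ⟨Nat.le_add_left 1 l, by omega⟩
          have hne : π (l+1) ≠ π k := fun hc => by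
            have := hinj (hmem _ (by omega) (by omega)) hk hc
            omega
          exact hno l k hPl.1 hlt (by omega) hk.2 ⟨lt_of_le_of_ne hle hne, hPl.2⟩
        · exact h k hki hk.2 ⟨h1, heq ▸ hPl.2⟩
  · rintro ⟨mn, mx, hS⟩ k hk1 hk2 ⟨hlt1, hlt2⟩
    have h1 : π (i+1) ∈ Set.Icc mn mx := by
      rw [← hS]; exact ⟨i+1, by omega, le_rfl, rfl, le_rfl⟩
    have h2 : π i ∈ Set.Icc mn mx := by
      rw [← hS]; exact ⟨i, hi1, by omega, rfl, by omega⟩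
    have h3 : π k ∈ Set.Icc mn mx :=
      ⟨le_trans h1.1 (le_of_lt hlt1), le_trans (le_of_lt hlt2) h2.2⟩
    rw [← hS] at h3
    obtain ⟨j, h1j, hji, hjeq, -⟩ := h3
    have := hinj (hmem _ h1j hji) ⟨by omega, hk2⟩ hjeq
    omega
end

section
/- Let π be a permutation of {1,...,n}, let a be the monotone triangle corresponding to π, and let 1 ≤ i ≤ n-1. Assume that π contains no 312 pattern at any position less than i. Then π contains the pattern 312 at position i if and only if the monotone triangle a contains a gap at row i, i.e., there exists j with a_{i,j} - a_{i+1,j} > 1. -/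
/-- `a` is the monotone triangle corresponding to the permutation `π` of `{1, …, n}`:
for each `1 ≤ i ≤ n`, the `i`-th row `(a i 1, …, a i i)` is strictly increasing and
is a rearrangement of `{π 1, …, π i}`. -/
def PermTriangle (n : ℕ) (π : ℕ → ℕ) (a : ℕ → ℕ → ℕ) : Prop :=
  ∀ i, 1 ≤ i → i ≤ n →
    (∀ j j', 1 ≤ j → j < j' → j' ≤ i → a i j < a i j') ∧
    {x | ∃ j, 1 ≤ j ∧ j ≤ i ∧ a i j = x} = {x | ∃ j, 1 ≤ j ∧ j ≤ i ∧ π j = x}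

/-- Rank characterization for a strictly increasing row. -/
lemma rank_le_iff (m : ℕ) (r : ℕ → ℕ)
    (hmono : ∀ j j', 1 ≤ j → j < j' → j' ≤ m → r j < r j')
    {j : ℕ} (hj1 : 1 ≤ j) (hjm : j ≤ m) (y : ℕ) :
    r j ≤ y ↔ j ≤ ((Finset.Icc 1 m).filter (fun l => r l ≤ y)).card := by
  constructor
  · intro h
    have hsub : Finset.Icc 1 j ⊆ (Finset.Icc 1 m).filter (fun l => r l ≤ y) := by
      intro l hl
      simp only [Finset.mem_Icc] at hl
      simp only [Finset.mem_filter, Finset.mem_Icc]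
      refine ⟨⟨hl.1, le_trans hl.2 hjm⟩, ?_⟩
      rcases eq_or_lt_of_le hl.2 with h' | h'
      · exact h' ▸ h
      · exact le_trans (hmono l j hl.1 h' hjm).le h
    have := Finset.card_le_card hsub
    rwa [Nat.card_Icc, Nat.add_sub_cancel] at this
  · intro h
    set S := (Finset.Icc 1 m).filter (fun l => r l ≤ y) with hS
    have hne : S.Nonempty := Finset.card_pos.mp (lt_of_lt_of_le hj1 h)
    set M := S.max' hne with hM
    have hMS : M ∈ S := S.max'_mem hne
    have hMfacts : (1 ≤ M ∧ M ≤ m) ∧ r M ≤ y := by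
      have := hMS
      simp only [hS, Finset.mem_filter, Finset.mem_Icc] at this
      exact this
    have hsub : S ⊆ Finset.Icc 1 M := by
      intro l hl
      have h1 : 1 ≤ l := by
        have := hl; simp only [hS, Finset.mem_filter, Finset.mem_Icc] at this; exact this.1.1
      have h2 : l ≤ M := S.le_max' l hl
      simp only [Finset.mem_Icc]; exact ⟨h1, h2⟩
    have hcard : S.card ≤ M := by
      have := Finset.card_le_card hsub
      rwa [Nat.card_Icc, Nat.add_sub_cancel] at this
    have hjM : j ≤ M := le_trans h hcard
    rcases eq_or_lt_of_le hjM with h' | h'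
    · exact h' ▸ hMfacts.2
    · exact le_trans (hmono j M hj1 h' hMfacts.1.2).le hMfacts.2

/-- Key bridge: the rank characterization expressed via counting π-values. -/
lemma key_iff (n m : ℕ) (π : ℕ → ℕ) (hπinj : Set.InjOn π (Set.Icc 1 n))
    (hm : m ≤ n) (r : ℕ → ℕ)
    (hmono : ∀ j j', 1 ≤ j → j < j' → j' ≤ m → r j < r j')
    (hset : {x | ∃ j, 1 ≤ j ∧ j ≤ m ∧ r j = x} = {x | ∃ j, 1 ≤ j ∧ j ≤ m ∧ π j = x})
    {j : ℕ} (hj1 : 1 ≤ j) (hjm : j ≤ m) (y : ℕ) :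
    r j ≤ y ↔ j ≤ ((Finset.Icc 1 m).filter (fun l => π l ≤ y)).card := by
  rw [rank_le_iff m r hmono hj1 hjm y]
  have hrinj : Set.InjOn r (Finset.Icc 1 m : Finset ℕ) := by
    intro x hx x' hx' hxx
    simp only [Finset.coe_Icc, Set.mem_Icc] at hx hx'
    by_contra hne
    rcases Nat.lt_or_ge x x' with h | h
    · exact absurd hxx (hmono x x' hx.1 h hx'.2).ne
    · have h' : x' < x := lt_of_le_of_ne h (fun e => hne e.symm)
      exact absurd hxx.symm (hmono x' x hx'.1 h' hx.2).ne
  have hπinj' : Set.InjOn π (Finset.Icc 1 m : Finset ℕ) := by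
    intro x hx x' hx' hxx
    simp only [Finset.coe_Icc, Set.mem_Icc] at hx hx'
    exact hπinj (Set.mem_Icc.mpr ⟨hx.1, le_trans hx.2 hm⟩)
      (Set.mem_Icc.mpr ⟨hx'.1, le_trans hx'.2 hm⟩) hxx
  have himg : (Finset.Icc 1 m).image r = (Finset.Icc 1 m).image π := by
    ext x
    have := Set.ext_iff.mp hset x
    simp only [Set.mem_setOf_eq] at this
    simp only [Finset.mem_image, Finset.mem_Icc]
    constructor
    · rintro ⟨l, hl, hlx⟩
      obtain ⟨l', h1, h2, h3⟩ := this.mp ⟨l, hl.1, hl.2, hlx⟩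
      exact ⟨l', ⟨h1, h2⟩, h3⟩
    · rintro ⟨l, hl, hlx⟩
      obtain ⟨l', h1, h2, h3⟩ := this.mpr ⟨l, hl.1, hl.2, hlx⟩
      exact ⟨l', ⟨h1, h2⟩, h3⟩
  have e1 : ((Finset.Icc 1 m).filter (fun l => r l ≤ y)).card
      = (((Finset.Icc 1 m).image r).filter (fun x => x ≤ y)).card := by
    rw [Finset.filter_image]
    rw [Finset.card_image_of_injOn (hrinj.mono (by
      intro x hx
      simp only [Finset.coe_filter, Set.mem_setOf_eq] at hx
      simp only [Finset.mem_coe]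
      exact hx.1))]
  have e2 : ((Finset.Icc 1 m).filter (fun l => π l ≤ y)).card
      = (((Finset.Icc 1 m).image π).filter (fun x => x ≤ y)).card := by
    rw [Finset.filter_image]
    rw [Finset.card_image_of_injOn (hπinj'.mono (by
      intro x hx
      simp only [Finset.coe_filter, Set.mem_setOf_eq] at hx
      simp only [Finset.mem_coe]
      exact hx.1))]
  rw [e1, e2, himg]

/-- Counting in row `i+1` versus row `i`. -/
lemma count_succ (π : ℕ → ℕ) (i y : ℕ) :
    ((Finset.Icc 1 (i+1)).filter (fun l => π l ≤ y)).card
      = ((Finset.Icc 1 i).filter (fun l => π l ≤ y)).card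
        + (if π (i+1) ≤ y then 1 else 0) := by
  have hins : Finset.Icc 1 (i+1) = insert (i+1) (Finset.Icc 1 i) := by
    ext l
    simp only [Finset.mem_Icc, Finset.mem_insert]
    omega
  rw [hins, Finset.filter_insert]
  by_cases h : π (i+1) ≤ y
  · rw [if_pos h, if_pos h, Finset.card_insert_of_notMem]
    intro hmem
    have := Finset.mem_of_mem_filter _ hmem
    simp only [Finset.mem_Icc] at this
    omega
  · rw [if_neg h, if_neg h, Nat.add_zero]

/-- Let `π` be a permutation of `{1, …, n}` with corresponding monotone triangle `a`,
and let `1 ≤ i ≤ n - 1`. Assume `π` contains no 312 pattern at any position `l < i`.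
Then `π` contains a 312 pattern at position `i` (i.e. there is `k` with
`i + 1 < k ≤ n` and `π i > π k > π (i+1)`) iff the triangle `a` has a gap at row `i`,
i.e. there is `j` with `a i j - a (i+1) j > 1`. -/
theorem pattern312_at_iff_gap (n : ℕ) (π : ℕ → ℕ)
    (hπ : Set.BijOn π (Set.Icc 1 n) (Set.Icc 1 n))
    (a : ℕ → ℕ → ℕ) (ha : PermTriangle n π a)
    (i : ℕ) (hi1 : 1 ≤ i) (hi : i ≤ n - 1)
    (hno : ∀ l k, 1 ≤ l → l < i → l + 1 < k → k ≤ n →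
      ¬(π (l + 1) < π k ∧ π k < π l)) :
    (∃ k, i + 1 < k ∧ k ≤ n ∧ π (i + 1) < π k ∧ π k < π i) ↔
    (∃ j, 1 ≤ j ∧ j ≤ i ∧ a (i + 1) j + 1 < a i j) := by
  have hn2 : 2 ≤ n := by omega
  have hin1 : i + 1 ≤ n := by omega
  have hiin : i ≤ n := by omega
  obtain ⟨hmono_i, hset_i⟩ := ha i hi1 hiin
  obtain ⟨hmono_i1, hset_i1⟩ := ha (i+1) (by omega) hin1
  have key_i : ∀ j, 1 ≤ j → j ≤ i → ∀ y,
      (a i j ≤ y ↔ j ≤ ((Finset.Icc 1 i).filter (fun l => π l ≤ y)).card) :=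
    fun j h1 h2 y => key_iff n i π hπ.injOn hiin (a i) hmono_i hset_i h1 h2 y
  have key_i1 : ∀ j, 1 ≤ j → j ≤ i + 1 → ∀ y,
      (a (i+1) j ≤ y ↔ j ≤ ((Finset.Icc 1 (i+1)).filter (fun l => π l ≤ y)).card) :=
    fun j h1 h2 y => key_iff n (i+1) π hπ.injOn hin1 (a (i+1)) hmono_i1 hset_i1 h1 h2 y
  have Nmono : ∀ (m y y' : ℕ), y ≤ y' →
      ((Finset.Icc 1 m).filter (fun l => π l ≤ y)).card
        ≤ ((Finset.Icc 1 m).filter (fun l => π l ≤ y')).card := by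
    intro m y y' h
    apply Finset.card_le_card
    intro x hx
    simp only [Finset.mem_filter] at hx ⊢
    exact ⟨hx.1, le_trans hx.2 h⟩
  have hrange : ∀ l, 1 ≤ l → l ≤ n → 1 ≤ π l ∧ π l ≤ n := by
    intro l h1 h2
    have := hπ.mapsTo (Set.mem_Icc.mpr ⟨h1, h2⟩)
    exact Set.mem_Icc.mp this
  constructor
  · -- 312 pattern at i implies gap
    rintro ⟨k, hk1, hk2, hk3, hk4⟩
    set c := ((Finset.Icc 1 i).filter (fun l => π l ≤ π k)).card with hc
    have hci : c < i := by
      have hssub : (Finset.Icc 1 i).filter (fun l => π l ≤ π k) ⊂ Finset.Icc 1 i := by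
        rw [Finset.ssubset_iff_of_subset (Finset.filter_subset _ _)]
        refine ⟨i, Finset.mem_Icc.mpr ⟨hi1, le_refl i⟩, ?_⟩
        simp only [Finset.mem_filter, Finset.mem_Icc, not_and]
        intro _
        omega
      have := Finset.card_lt_card hssub
      rwa [Nat.card_Icc, Nat.add_sub_cancel] at this
    have hvk : π k < a i (c+1) := by
      by_contra h
      push_neg at h
      have := (key_i (c+1) (by omega) (by omega) (π k)).mp h
      omega
    have hkne : ∀ l, 1 ≤ l → l ≤ i → π l ≠ π k := by
      intro l h1 h2 heq
      have := hπ.injOn (Set.mem_Icc.mpr ⟨h1, by omega⟩)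
        (Set.mem_Icc.mpr ⟨by omega, hk2⟩) heq
      omega
    have hfe : (Finset.Icc 1 i).filter (fun l => π l ≤ π k - 1)
        = (Finset.Icc 1 i).filter (fun l => π l ≤ π k) := by
      ext l
      simp only [Finset.mem_filter, Finset.mem_Icc]
      constructor
      · rintro ⟨h, h'⟩
        exact ⟨h, by omega⟩
      · rintro ⟨h, h'⟩
        have := hkne l h.1 h.2
        exact ⟨h, by omega⟩
    have hNk : ((Finset.Icc 1 (i+1)).filter (fun l => π l ≤ π k - 1)).card = c + 1 := by
      rw [count_succ, hfe, if_pos (by omega : π (i+1) ≤ π k - 1)]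
    have hgap : a (i+1) (c+1) ≤ π k - 1 :=
      (key_i1 (c+1) (by omega) (by omega) (π k - 1)).mpr (by rw [hNk])
    exact ⟨c+1, by omega, by omega, by omega⟩
  · -- gap implies 312 pattern at i
    rintro ⟨j, hj1, hji, hgap⟩
    set u := a (i+1) j with hu
    have h1 : j ≤ ((Finset.Icc 1 (i+1)).filter (fun l => π l ≤ u)).card :=
      (key_i1 j hj1 (by omega) u).mp (le_refl u)
    have h2 : ((Finset.Icc 1 i).filter (fun l => π l ≤ u + 1)).card < j := by
      by_contra h
      push_neg at h
      have := (key_i j hj1 hji (u+1)).mpr h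
      omega
    have hπi1u : π (i+1) ≤ u := by
      by_contra h
      push_neg at h
      have e := count_succ π i u
      rw [if_neg (by omega)] at e
      have hm := Nmono i u (u+1) (by omega)
      omega
    have hwnot : ∀ l, 1 ≤ l → l ≤ i + 1 → π l ≠ u + 1 := by
      intro l hl1 hl2 heq
      have hss : (Finset.Icc 1 (i+1)).filter (fun x => π x ≤ u)
          ⊂ (Finset.Icc 1 (i+1)).filter (fun x => π x ≤ u + 1) := by
        rw [Finset.ssubset_iff_of_subset (by
          intro x hx
          simp only [Finset.mem_filter] at hx ⊢
          exact ⟨hx.1, by omega⟩)]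
        refine ⟨l, ?_, ?_⟩
        · simp only [Finset.mem_filter, Finset.mem_Icc]
          exact ⟨⟨hl1, hl2⟩, by omega⟩
        · simp only [Finset.mem_filter, Finset.mem_Icc, not_and]
          intro _
          omega
      have hcc := Finset.card_lt_card hss
      have e := count_succ π i (u+1)
      rw [if_pos (by omega : π (i+1) ≤ u + 1)] at e
      omega
    have hmem := (Set.ext_iff.mp hset_i (a i j)).mp ⟨j, hj1, hji, rfl⟩
    obtain ⟨l0, hl01, hl0i, hl0v⟩ := hmem
    have hvn : a i j ≤ n := by
      rw [← hl0v]
      exact (hrange l0 hl01 (by omega)).2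
    obtain ⟨k, hkicc, hπk⟩ := hπ.surjOn (Set.mem_Icc.mpr ⟨by omega, by omega⟩ :
      u + 1 ∈ Set.Icc 1 n)
    rw [Set.mem_Icc] at hkicc
    have hk2 : i + 1 < k := by
      by_contra h
      push_neg at h
      exact hwnot k hkicc.1 h hπk
    have chain : ∀ m, l0 ≤ m → m ≤ i → π k < π m := by
      intro m hm
      induction m, hm using Nat.le_induction with
      | base =>
        intro _
        rw [hπk, hl0v]
        omega
      | succ m hlm ih =>
        intro hmi1
        have hkm := ih (by omega)
        have hnm := hno m k (by omega) (by omega) (by omega) hkicc.2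
        have hle : π k ≤ π (m+1) := by
          by_contra h
          push_neg at h
          exact hnm ⟨h, hkm⟩
        have hne : π k ≠ π (m+1) := by
          intro e
          have := hπ.injOn (Set.mem_Icc.mpr ⟨hkicc.1, hkicc.2⟩)
            (Set.mem_Icc.mpr ⟨by omega, by omega⟩) e
          omega
        omega
    exact ⟨k, hk2, hkicc.2, by omega, chain i hl0i le_rfl⟩
end

section
/- A permutation π of {1,...,n} avoids the pattern 312 if and only if the monotone triangle corresponding to π is gapless. -/
/-- The number of positions `1 ≤ j ≤ i` with `π j ≤ w`. -/
def permCount (π : ℕ → ℕ) (i w : ℕ) : ℕ :=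
  ((Finset.Icc 1 i).filter (fun j => π j ≤ w)).card

lemma permCount_succ_le (π : ℕ → ℕ) (i w : ℕ) :
    permCount π (i + 1) w ≤ permCount π i w + 1 := by
  unfold permCount
  have h : Finset.Icc 1 (i+1) = insert (i+1) (Finset.Icc 1 i) := by
    ext x; simp [Finset.mem_Icc]; omega
  rw [h, Finset.filter_insert]
  split
  · exact le_trans (Finset.card_insert_le _ _) (by omega)
  · omega

lemma permCount_succ_eq (π : ℕ → ℕ) (i w : ℕ) (hw : ¬ π (i+1) ≤ w) :
    permCount π (i + 1) w = permCount π i w := by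
  unfold permCount
  have h : Finset.Icc 1 (i+1) = insert (i+1) (Finset.Icc 1 i) := by
    ext x; simp [Finset.mem_Icc]; omega
  rw [h, Finset.filter_insert, if_neg hw]

lemma permCount_succ_eq' (π : ℕ → ℕ) (i w : ℕ) (hw : π (i+1) ≤ w) :
    permCount π (i + 1) w = permCount π i w + 1 := by
  unfold permCount
  have h : Finset.Icc 1 (i+1) = insert (i+1) (Finset.Icc 1 i) := by
    ext x; simp [Finset.mem_Icc]; omega
  rw [h, Finset.filter_insert, if_pos hw]
  rw [Finset.card_insert_of_notMem (by simp [Finset.mem_Icc])]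

/-- monotone (non-strict) version of the row monotonicity -/
lemma row_mono_le {i : ℕ} {a : ℕ → ℕ → ℕ}
    (mono : ∀ j j', 1 ≤ j → j < j' → j' ≤ i → a i j < a i j')
    {j j' : ℕ} (h1 : 1 ≤ j) (h2 : j ≤ j') (h3 : j' ≤ i) : a i j ≤ a i j' := by
  rcases eq_or_lt_of_le h2 with rfl | h
  · exact le_refl _
  · exact le_of_lt (mono j j' h1 h h3)

/-- Key lemma: the `c`-th entry of row `i` is `≤ w` iff at least `c` of the first
`i` values of `π` are `≤ w`. -/
lemma row_le_iff (n : ℕ) (π : ℕ → ℕ)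
    (hπ : Set.BijOn π (Set.Icc 1 n) (Set.Icc 1 n))
    (a : ℕ → ℕ → ℕ) (ha : PermTriangle n π a)
    {i c : ℕ} (hi1 : 1 ≤ i) (hin : i ≤ n) (hc1 : 1 ≤ c) (hci : c ≤ i) (w : ℕ) :
    a i c ≤ w ↔ c ≤ permCount π i w := by
  obtain ⟨mono, seteq⟩ := ha i hi1 hin
  set Fa := (Finset.Icc 1 i).filter (fun j => a i j ≤ w) with hFa
  set Fπ := (Finset.Icc 1 i).filter (fun j => π j ≤ w) with hFπ
  have himg : Fa.image (a i) = Fπ.image π := by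
    ext x
    simp only [hFa, hFπ, Finset.mem_image, Finset.mem_filter, Finset.mem_Icc]
    constructor
    · rintro ⟨j, ⟨⟨hj1, hj2⟩, hj3⟩, rfl⟩
      have hx : a i j ∈ {x | ∃ j, 1 ≤ j ∧ j ≤ i ∧ π j = x} :=
        seteq ▸ ⟨j, hj1, hj2, rfl⟩
      obtain ⟨j', h1', h2', h3'⟩ := hx
      exact ⟨j', ⟨⟨h1', h2'⟩, h3' ▸ hj3⟩, h3'⟩
    · rintro ⟨j, ⟨⟨hj1, hj2⟩, hj3⟩, rfl⟩
      have hx : π j ∈ {x | ∃ j, 1 ≤ j ∧ j ≤ i ∧ a i j = x} :=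
        seteq.symm ▸ ⟨j, hj1, hj2, rfl⟩
      obtain ⟨j', h1', h2', h3'⟩ := hx
      exact ⟨j', ⟨⟨h1', h2'⟩, h3' ▸ hj3⟩, h3'⟩
  have inja : Set.InjOn (a i) Fa := by
    intro x hx y hy hxy
    simp only [hFa, Finset.coe_filter, Finset.mem_Icc, Set.mem_setOf_eq] at hx hy
    rcases lt_trichotomy x y with h | h | h
    · exact absurd hxy (ne_of_lt (mono x y hx.1.1 h hy.1.2))
    · exact h
    · exact absurd hxy.symm (ne_of_lt (mono y x hy.1.1 h hx.1.2))
  have injπ : Set.InjOn π Fπ := by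
    apply hπ.injOn.mono
    intro x hx
    simp only [hFπ, Finset.coe_filter, Finset.mem_Icc, Set.mem_setOf_eq] at hx
    exact ⟨hx.1.1, le_trans hx.1.2 hin⟩
  have hcard : Fa.card = Fπ.card := by
    rw [← Finset.card_image_of_injOn inja, ← Finset.card_image_of_injOn injπ, himg]
  have hN : permCount π i w = Fπ.card := rfl
  constructor
  · intro h
    have hsub : Finset.Icc 1 c ⊆ Fa := by
      intro j hj
      simp only [Finset.mem_Icc] at hj
      simp only [hFa, Finset.mem_filter, Finset.mem_Icc]
      exact ⟨⟨hj.1, le_trans hj.2 hci⟩,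
        le_trans (row_mono_le mono hj.1 hj.2 hci) h⟩
    have := Finset.card_le_card hsub
    simp only [Nat.card_Icc] at this
    omega
  · intro h
    by_contra hw
    push_neg at hw
    have hsub : Fa ⊆ Finset.Icc 1 (c - 1) := by
      intro j hj
      simp only [hFa, Finset.mem_filter, Finset.mem_Icc] at hj
      simp only [Finset.mem_Icc]
      refine ⟨hj.1.1, ?_⟩
      by_contra hcj
      push_neg at hcj
      have : c ≤ j := by omega
      exact absurd (le_trans (row_mono_le mono hc1 this hj.1.2) hj.2)
        (not_le.mpr hw)
    have := Finset.card_le_card hsub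
    simp only [Nat.card_Icc] at this
    omega

/-- A permutation `π` of `{1, …, n}` avoids the pattern 312 (there are no
`1 ≤ i < j < k ≤ n` with `π i > π k > π j`) iff its monotone triangle is gapless
(no `i, j` with `a i j - a (i+1) j > 1`). -/
theorem avoids312_iff_gapless (n : ℕ) (π : ℕ → ℕ)
    (hπ : Set.BijOn π (Set.Icc 1 n) (Set.Icc 1 n))
    (a : ℕ → ℕ → ℕ) (ha : PermTriangle n π a) :
    (¬ ∃ i j k, 1 ≤ i ∧ i < j ∧ j < k ∧ k ≤ n ∧ π j < π k ∧ π k < π i) ↔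
    (∀ i j, 1 ≤ j → j ≤ i → i + 1 ≤ n → a i j ≤ a (i + 1) j + 1) := by
  constructor
  · -- no 312 pattern ⇒ gapless
    intro havoid i q hq1 hqi hin
    by_contra hgap
    push_neg at hgap
    -- gap : a i q ≥ a (i+1) q + 2
    set w := a (i+1) q + 1 with hw
    have hi1 : 1 ≤ i := le_trans hq1 hqi
    have hiN : i ≤ n := by omega
    have hq1' : q ≤ i + 1 := by omega
    -- a (i+1) q ≤ w  ⇒  q ≤ permCount π (i+1) w
    have h1 : q ≤ permCount π (i+1) w :=
      (row_le_iff n π hπ a ha (by omega) hin hq1 hq1' w).mp (by omega)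
    -- a i q > w  ⇒  permCount π i w < q
    have h2 : permCount π i w ≤ q - 1 := by
      by_contra h
      push_neg at h
      have : q ≤ permCount π i w := by omega
      have := (row_le_iff n π hπ a ha hi1 hiN hq1 hqi w).mpr this
      omega
    -- hence π (i+1) ≤ w, in fact the counts pin down
    have hv : π (i+1) ≤ w := by
      by_contra h
      have := permCount_succ_eq π i w h
      omega
    -- w is not a value of π on [1, i+1]
    have hwnot : ∀ k, 1 ≤ k → k ≤ i + 1 → π k ≠ w := by
      intro k hk1 hk2 hkw
      -- then w ∈ row (i+1), at some position q' > q, so a (i+1) (q+1) ≤ w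
      obtain ⟨mono, seteq⟩ := ha (i+1) (by omega) hin
      have hx : w ∈ {x | ∃ j, 1 ≤ j ∧ j ≤ i + 1 ∧ a (i+1) j = x} :=
        seteq.symm ▸ ⟨k, hk1, hk2, hkw⟩
      obtain ⟨q', hq'1, hq'2, hq'3⟩ := hx
      have hqq' : q < q' := by
        by_contra h
        push_neg at h
        have := row_mono_le mono hq'1 h hq1'
        omega
      have : a (i+1) (q+1) ≤ w := by
        have := row_mono_le mono (by omega) (by omega : q + 1 ≤ q') hq'2
        omega
      have := (row_le_iff n π hπ a ha (by omega) hin (by omega) (by omega : q + 1 ≤ i + 1) w).mp this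
      have := permCount_succ_le π i w
      omega
    -- v := π (i+1) < w
    have hvlt : π (i+1) < w :=
      lt_of_le_of_ne hv (hwnot (i+1) (by omega) (le_refl _))
    -- u := a i q ∈ P_i, i.e. u = π m for some 1 ≤ m ≤ i, and u > w
    obtain ⟨mono, seteq⟩ := ha i hi1 hiN
    have hx : a i q ∈ {x | ∃ j, 1 ≤ j ∧ j ≤ i ∧ π j = x} :=
      seteq ▸ ⟨q, hq1, hqi, rfl⟩
    obtain ⟨m, hm1, hm2, hm3⟩ := hx
    -- w ∈ Icc 1 n, so w = π k for some k ∈ Icc 1 n, and k > i+1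
    have hun : π m ≤ n := (hπ.mapsTo ⟨hm1, le_trans hm2 hiN⟩).2
    have hwn : w ∈ Set.Icc 1 n := ⟨by omega, by omega⟩
    obtain ⟨k, hk, hk3⟩ := hπ.surjOn hwn
    obtain ⟨hk1, hk2⟩ := hk
    have hki : i + 1 < k := by
      rcases lt_or_ge (i+1) k with h | h
      · exact h
      · exact absurd hk3 (hwnot k hk1 h)
    exact havoid ⟨m, i+1, k, hm1, by omega, hki, hk2, by omega, by omega⟩
  · -- gapless ⇒ no 312 pattern
    intro hgapless ⟨i, j, k, hi1, hij, hjk, hkn, hjv, hvw⟩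
    -- v := π j < w := π k < u := π i, with i < j < k
    set w := π k with hwdef
    have hj1 : 1 ≤ j := by omega
    have hjn : j ≤ n := by omega
    set c := permCount π j w with hc
    -- c ≥ 1 : position j gives π j ≤ w
    have hc1 : 1 ≤ c := by
      rw [hc]
      unfold permCount
      have hmem : j ∈ (Finset.Icc 1 j).filter (fun m => π m ≤ w) := by
        simp [Finset.mem_Icc, Finset.mem_filter]; omega
      exact Finset.card_pos.mpr ⟨j, hmem⟩
    -- c ≤ j - 1 : position i gives π i > w
    have hc2 : c ≤ j - 1 := by
      have hsub : (Finset.Icc 1 j).filter (fun m => π m ≤ w) ⊆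
          (Finset.Icc 1 j).erase i := by
        intro m hm
        simp only [Finset.mem_filter, Finset.mem_Icc] at hm
        rw [Finset.mem_erase]
        refine ⟨?_, by simp [Finset.mem_Icc]; omega⟩
        intro h; subst h; omega
      have := Finset.card_le_card hsub
      have hcard := Finset.card_erase_of_mem
        (show i ∈ Finset.Icc 1 j by simp [Finset.mem_Icc]; omega)
      rw [hc]
      unfold permCount
      simp only [Nat.card_Icc] at this hcard
      omega
    -- permCount π (j-1) w = c - 1 since π j ≤ w
    have hstep : permCount π j w = permCount π (j-1) w + 1 := by
      have := permCount_succ_eq' π (j-1) w (by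
        have : j - 1 + 1 = j := by omega
        rw [this]; omega)
      have hj' : j - 1 + 1 = j := by omega
      rwa [hj'] at this
    -- a j c ≤ w, and in fact a j c < w since w = π k ∉ P_j
    have hajc : a j c ≤ w :=
      (row_le_iff n π hπ a ha hj1 hjn hc1 (by omega) w).mpr (le_refl _)
    have hajc' : a j c < w := by
      rcases lt_or_eq_of_le hajc with h | h
      · exact h
      · exfalso
        obtain ⟨_, seteq⟩ := ha j hj1 hjn
        have hx : a j c ∈ {x | ∃ m, 1 ≤ m ∧ m ≤ j ∧ π m = x} :=
          seteq ▸ ⟨c, hc1, by omega, rfl⟩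
        obtain ⟨m, hm1, hm2, hm3⟩ := hx
        have : m ≠ k := by omega
        exact this (hπ.injOn ⟨hm1, le_trans hm2 hjn⟩ ⟨by omega, hkn⟩ (by rw [hm3, h]))
    -- a (j-1) c > w
    have hbig : ¬ a (j-1) c ≤ w := by
      intro h
      have := (row_le_iff n π hπ a ha (by omega : 1 ≤ j - 1) (by omega) hc1 hc2 w).mp h
      omega
    push_neg at hbig
    -- contradiction with gaplessness at (j-1, c)
    have := hgapless (j-1) c hc1 hc2 (by omega)
    have hj' : j - 1 + 1 = j := by omega
    rw [hj'] at this
    omega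
end

section
/- If a Gog word w = x_1 x_2 ... x_n contains a 312-subpattern (c, a, b) at positions x_i, x_j, x_k with lengths 2p_i - 1, 2p_j - 1, 2p_k - 1 respectively, then the triple ((x_i)_{2p_i - 1}, (x_j)_1, b), consisting of the last entry of x_i, the first entry of x_j, and b, is also a 312-subpattern of w at the same positions (i, j, k). -/
/-- `v` occurs at an odd-numbered (1-indexed) position of the tuple `t`
(modelled as a list; position `j+1` is odd iff the 0-based index `j` is even). -/
def OddPos (t : List ℕ) (v : ℕ) : Prop :=
  ∃ j, j < t.length ∧ j % 2 = 0 ∧ t.getD j 0 = v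

/-- `v` occurs at an even-numbered (1-indexed) position of the tuple `t`. -/
def EvenPos (t : List ℕ) (v : ℕ) : Prop :=
  ∃ j, j < t.length ∧ j % 2 = 1 ∧ t.getD j 0 = v

/-- A Gog word of size `n`: a sequence `x 1, …, x n` of strictly increasing tuples of
odd length, with entries in `{1, …, n}`, such that every integer occurring in an
even-numbered position of some tuple also occurs at an odd-numbered position of an
earlier and of a later tuple, and the successive occurrences of any repeated integer
alternate between odd- and even-numbered positions. -/
def IsGogWord (n : ℕ) (x : ℕ → List ℕ) : Prop :=
  (∀ i, 1 ≤ i → i ≤ n → (x i).length % 2 = 1) ∧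
  (∀ i, 1 ≤ i → i ≤ n → List.Pairwise (· < ·) (x i)) ∧
  (∀ i, 1 ≤ i → i ≤ n → ∀ v ∈ x i, 1 ≤ v ∧ v ≤ n) ∧
  (∀ i, 1 ≤ i → i ≤ n → ∀ v, EvenPos (x i) v →
     (∃ i', 1 ≤ i' ∧ i' < i ∧ OddPos (x i') v) ∧
     (∃ i', i < i' ∧ i' ≤ n ∧ OddPos (x i') v)) ∧
  (∀ v i i', 1 ≤ i → i < i' → i' ≤ n → v ∈ x i → v ∈ x i' →
     (∀ l, i < l → l < i' → v ∉ x l) → (OddPos (x i) v ↔ ¬ OddPos (x i') v))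

/-- `m` is active with respect to the tuple `t = (p 1, q 1, …, p (k-1), q (k-1), p k)`
if `m > p k` (the last entry) or `p j < m < q j` for some `j ≤ k - 1`. -/
def ActiveWrt (t : List ℕ) (m : ℕ) : Prop :=
  t.getD (t.length - 1) 0 < m ∨
  ∃ j, 2 * j + 1 < t.length ∧ t.getD (2 * j) 0 < m ∧ m < t.getD (2 * j + 1) 0

/-- The integers `(c, a, b)` form a 312-subpattern of the Gog word `x` at positions
`(i, j, k)`: `i < j < k`; `c, a, b` appear at odd-numbered positions of
`x i, x j, x k` respectively; `b` is not at an even-numbered position of any of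
`x (i+1), …, x (k-1)`; `b` is active with respect to `x j`; and `a < b < c`. -/
def Is312At (x : ℕ → List ℕ) (c a b : ℕ) (i j k : ℕ) : Prop :=
  i < j ∧ j < k ∧
  OddPos (x i) c ∧ OddPos (x j) a ∧ OddPos (x k) b ∧
  (∀ l, i < l → l < k → ¬ EvenPos (x l) b) ∧
  ActiveWrt (x j) b ∧ a < b ∧ b < c

lemma sorted_getD_le {l : List ℕ} (hs : List.Pairwise (· < ·) l)
    {m m' : ℕ} (hmm : m ≤ m') (hm' : m' < l.length) :
    l.getD m 0 ≤ l.getD m' 0 := by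
  rw [List.getD_eq_getElem l 0 (lt_of_le_of_lt hmm hm'),
      List.getD_eq_getElem l 0 hm']
  rcases eq_or_lt_of_le hmm with rfl | hlt
  · exact le_refl _
  · exact le_of_lt (List.pairwise_iff_get.mp hs ⟨m, lt_of_le_of_lt hmm hm'⟩ ⟨m', hm'⟩ hlt)

/-- If a Gog word `x` of size `n` contains a 312-subpattern `(c, a, b)` at positions
`(i, j, k)`, then the triple consisting of the last entry of `x i`, the first entry
of `x j`, and `b` is also a 312-subpattern of `x` at the same positions. -/
theorem subpattern312_extreme (n : ℕ) (x : ℕ → List ℕ) (hw : IsGogWord n x)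
    (c a b i j k : ℕ) (hi : 1 ≤ i) (hk : k ≤ n)
    (h : Is312At x c a b i j k) :
    Is312At x ((x i).getD ((x i).length - 1) 0) ((x j).getD 0 0) b i j k := by
  obtain ⟨hij, hjk, ⟨ji, hji, hjie, hjic⟩, ⟨jj, hjj, hjje, hjja⟩, hb, hnb, hact, hab, hbc⟩ := h
  have hin : i ≤ n := le_trans (le_of_lt (lt_trans hij hjk)) hk
  have hj1 : 1 ≤ j := le_trans hi (le_of_lt hij)
  have hjn : j ≤ n := le_trans (le_of_lt hjk) hk
  have hleni := hw.1 i hi hin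
  have hsorti := hw.2.1 i hi hin
  have hsortj := hw.2.1 j hj1 hjn
  have hlpos : 0 < (x i).length := lt_of_le_of_lt (Nat.zero_le ji) hji
  have hjjpos : 0 < (x j).length := lt_of_le_of_lt (Nat.zero_le jj) hjj
  refine ⟨hij, hjk, ⟨(x i).length - 1, Nat.sub_lt hlpos one_pos, ?_, rfl⟩,
    ⟨0, hjjpos, rfl, rfl⟩, hb, hnb, hact, ?_, ?_⟩
  · omega
  · calc (x j).getD 0 0 ≤ a := hjja ▸ sorted_getD_le hsortj (Nat.zero_le jj) hjj
      _ < b := hab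
  · calc b < c := hbc
      _ ≤ (x i).getD ((x i).length - 1) 0 :=
        hjic ▸ sorted_getD_le hsorti (by omega) (Nat.sub_lt hlpos one_pos)
end

section
/- If a Gog word w = x_1 ... x_n contains a 312-subpattern, then there exist positions i and k with k > i+1 and a triple of integers (c, a, b) that forms a 312-subpattern of w occurring at the tuples x_i, x_{i+1}, x_k (i.e., occurring at consecutive first two positions). -/
lemma getD_mem {t : List ℕ} {j : ℕ} (h : j < t.length) : t.getD j 0 ∈ t := by
  rw [List.getD_eq_getElem _ _ h]; exact List.getElem_mem h

lemma oddPos_mem {t : List ℕ} {v : ℕ} (h : OddPos t v) : v ∈ t := by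
  obtain ⟨j, hj, _, he⟩ := h; exact he ▸ getD_mem hj

lemma evenPos_of_mem_not_odd {t : List ℕ} {v : ℕ} (hm : v ∈ t) (h : ¬ OddPos t v) :
    EvenPos t v := by
  obtain ⟨j, hj, he⟩ := List.mem_iff_getElem.1 hm
  rcases Nat.mod_two_eq_zero_or_one j with h2 | h2
  · exact absurd ⟨j, hj, h2, by rw [List.getD_eq_getElem _ _ hj]; exact he⟩ h
  · exact ⟨j, hj, h2, by rw [List.getD_eq_getElem _ _ hj]; exact he⟩

lemma even_between (n : ℕ) (x : ℕ → List ℕ) (hw : IsGogWord n x) (b : ℕ) :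
    ∀ d l l', l' - l ≤ d → 1 ≤ l → l < l' → l' ≤ n → OddPos (x l) b → OddPos (x l') b →
      ∃ m, l < m ∧ m < l' ∧ b ∈ x m ∧ ¬ OddPos (x m) b := by
  intro d
  induction d with
  | zero => intro l l' hd h1 hlt _ _ _; omega
  | succ d ih =>
    intro l l' hd h1 hlt hn ho ho'
    by_cases hex : ∃ m, l < m ∧ m < l' ∧ b ∈ x m
    · obtain ⟨m, hm1, hm2, hm3⟩ := hex
      by_cases hom : OddPos (x m) b
      · obtain ⟨m', h1', h2', h3', h4'⟩ := ih m l' (by omega) (by omega) hm2 hn hom ho'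
        exact ⟨m', by omega, h2', h3', h4'⟩
      · exact ⟨m, hm1, hm2, hm3, hom⟩
    · have hiff := hw.2.2.2.2 b l l' h1 hlt hn (oddPos_mem ho) (oddPos_mem ho')
        (fun m h1 h2 hm => hex ⟨m, h1, h2, hm⟩)
      exact absurd ho' (hiff.1 ho)

/-- If a Gog word `x` of size `n` contains a 312-subpattern, then it contains a
312-subpattern whose first two positions are consecutive, i.e. occurring at tuples
`x i, x (i+1), x k` for some `k > i + 1`. -/
theorem subpattern312_consecutive (n : ℕ) (x : ℕ → List ℕ) (hw : IsGogWord n x)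
    (h : ∃ c a b i j k, 1 ≤ i ∧ k ≤ n ∧ Is312At x c a b i j k) :
    ∃ c a b i k, 1 ≤ i ∧ i + 1 < k ∧ k ≤ n ∧ Is312At x c a b i (i + 1) k := by
  obtain ⟨c, a, b, i, j, k, hi, hk, hp⟩ := h
  suffices H : ∀ d i c a, j - i ≤ d → 1 ≤ i → Is312At x c a b i j k →
      ∃ c a b i k, 1 ≤ i ∧ i + 1 < k ∧ k ≤ n ∧ Is312At x c a b i (i + 1) k by
    exact H (j - i) i c a le_rfl hi hp
  intro d
  induction d with
  | zero => intro i c a hd h1 hp; obtain ⟨h, _⟩ := hp; omega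
  | succ d ih =>
    intro i c a hd h1 hp
    obtain ⟨hij, hjk, hoc, hoa, hob, hne, hact, hab, hbc⟩ := hp
    by_cases hcons : j = i + 1
    · subst hcons
      exact ⟨c, a, b, i, k, h1, hjk, hk, by omega, hjk, hoc, hoa, hob, hne, hact, hab, hbc⟩
    · have hij' : i + 1 < j := by omega
      have hlen : (x (i+1)).length % 2 = 1 := hw.1 (i+1) (by omega) (by omega)
      have hpos : 0 < (x (i+1)).length := by omega
      have hlast : ((x (i+1)).length - 1) % 2 = 0 := by omega
      set p := (x (i+1)).getD ((x (i+1)).length - 1) 0 with hpdef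
      have hop : OddPos (x (i+1)) p := ⟨(x (i+1)).length - 1, by omega, hlast, rfl⟩
      rcases lt_trichotomy p b with hpb | hpb | hpb
      · exact ⟨c, p, b, i, k, h1, by omega, hk,
          by omega, by omega, hoc, hop, hob, hne, Or.inl hpb, hpb, hbc⟩
      · have hob' : OddPos (x (i+1)) b := hpb ▸ hop
        obtain ⟨m, hm1, hm2, hm3, hm4⟩ := even_between n x hw b (k - (i+1)) (i+1) k
          le_rfl (by omega) (by omega) (by omega) hob' hob
        exact absurd (evenPos_of_mem_not_odd hm3 hm4) (hne m (by omega) hm2)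
      · exact ih (i+1) p a (by omega) (by omega)
          ⟨hij', hjk, hop, hoa, hob, fun l hl1 hl2 => hne l (by omega) hl2, hact, hab, hpb⟩
end
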